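/- arXiv:2203.07411 — 5 statements merged into one kernel-verified Lean document; each statement's English description precedes it below -/
import Mathlib

section
/- Let D ≥ 1, σ₁, σ₂ > 0, and let x ∈ ℝ^D be a nonzero vector. Let Ω be a 2×D random matrix whose entries are i.i.d. N(0, σ₁²) and let W ∈ ℝ^{1×2} be a random row vector whose entries are i.i.d. N(0, σ₂²), with W independent of Ω. Then for every q ∈ ℝ, the characteristic function of f = W Ω x satisfies E[exp(i q f)] = 1/(1 + κ² q²), where κ = σ₁ σ₂ ‖x‖. -/
open MeasureTheory ProbabilityTheory Real
open scoped NNReal ENNReal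

lemma indep_comp_integral_mul {Ω β γ : Type*} [MeasurableSpace Ω] [MeasurableSpace β]
    [MeasurableSpace γ] {μ : Measure Ω} [IsFiniteMeasure μ]
    {f : Ω → β} {g : Ω → γ} (hf : Measurable f) (hg : Measurable g)
    (h : IndepFun f g μ) {F : β → ℂ} {G : γ → ℂ}
    (hF : Measurable F) (hG : Measurable G) :
    ∫ ω, F (f ω) * G (g ω) ∂μ = (∫ ω, F (f ω) ∂μ) * ∫ ω, G (g ω) ∂μ := by
  have hmap := (indepFun_iff_map_prod_eq_prod_map_map hf.aemeasurable hg.aemeasurable).1 h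
  have h1 : ∫ ω, F (f ω) * G (g ω) ∂μ
      = ∫ p : β × γ, F p.1 * G p.2 ∂(μ.map (fun ω => (f ω, g ω))) := by
    exact (integral_map (hf.prodMk hg).aemeasurable
      ((hF.comp measurable_fst).mul (hG.comp measurable_snd)).aestronglyMeasurable).symm
  rw [h1, hmap, integral_prod_mul, integral_map hf.aemeasurable hF.aestronglyMeasurable,
    integral_map hg.aemeasurable hG.aestronglyMeasurable]

lemma iIndep_integral_prod {Ω ι : Type*} [MeasurableSpace Ω] {μ : Measure Ω}
    [IsProbabilityMeasure μ] [Fintype ι] {f : ι → Ω → ℝ}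
    (hf : ∀ i, Measurable (f i))
    (hindep : iIndepFun f μ)
    (F : ι → ℝ → ℂ) (hF : ∀ i, Measurable (F i)) :
    ∫ ω, ∏ i, F i (f i ω) ∂μ = ∏ i, ∫ ω, F i (f i ω) ∂μ := by
  classical
  have key : ∀ s : Finset ι, ∫ ω, ∏ i ∈ s, F i (f i ω) ∂μ = ∏ i ∈ s, ∫ ω, F i (f i ω) ∂μ := by
    intro s
    induction s using Finset.induction_on with
    | empty => simp
    | insert j s hj ih =>
      have hind : IndepFun (fun a (i : ({j} : Finset ι)) => f i a)
          (fun a (i : s) => f i a) μ :=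
        hindep.indepFun_finset {j} s (by simp [Finset.disjoint_left, hj]) hf
      have hcomp := indep_comp_integral_mul
        (f := fun a (i : ({j} : Finset ι)) => f i a) (g := fun a (i : s) => f i a)
        (measurable_pi_lambda _ fun i => hf i) (measurable_pi_lambda _ fun i => hf i) hind
        (F := fun t => F j (t ⟨j, Finset.mem_singleton_self j⟩))
        (G := fun t => ∏ i : s, F i (t i))
        ((hF j).comp (measurable_pi_apply _))
        (Finset.measurable_prod Finset.univ fun i _ => (hF i).comp (measurable_pi_apply _))
      simp only at hcomp
      have e1 : ∀ ω, (∏ i : s, F i (f i ω)) = ∏ i ∈ s, F i (f i ω) := by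
        intro ω; exact Finset.prod_coe_sort s fun i => F i (f i ω)
      simp_rw [e1] at hcomp
      simp_rw [Finset.prod_insert hj]
      rw [hcomp, ih]
  simpa using key Finset.univ

lemma integral_gaussianReal_eq (v : ℝ≥0) (hv : v ≠ 0) (f : ℝ → ℂ) :
    ∫ y, f y ∂(gaussianReal 0 v) = ∫ y, (gaussianPDFReal 0 v y : ℂ) * f y := by
  rw [gaussianReal_of_var_ne_zero 0 hv]
  have hd : gaussianPDF 0 v = fun y => ((Real.toNNReal (gaussianPDFReal 0 v y) : ℝ≥0) : ℝ≥0∞) := by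
    funext y; rfl
  rw [hd, integral_withDensity_eq_integral_smul
    ((measurable_gaussianPDFReal 0 v).real_toNNReal) f]
  congr 1
  funext y
  rw [NNReal.smul_def, Real.coe_toNNReal _ (gaussianPDFReal_nonneg 0 v y), Complex.real_smul]

lemma char_gaussianReal (v : ℝ≥0) (hv : v ≠ 0) (t : ℝ) :
    ∫ y, Complex.exp ((t * y : ℝ) * Complex.I) ∂(gaussianReal 0 v)
      = Complex.exp (-((v : ℝ) * t ^ 2 / 2 : ℝ)) := by
  have hv' : (0:ℝ) < (v : ℝ) := lt_of_le_of_ne (v.coe_nonneg) (by exact_mod_cast (Ne.symm hv))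
  have h2v : (0:ℝ) < 2 * Real.pi * v := by positivity
  rw [integral_gaussianReal_eq v hv]
  have heq : ∀ y : ℝ, (gaussianPDFReal 0 v y : ℂ) * Complex.exp ((t * y : ℝ) * Complex.I)
      = ((Real.sqrt (2 * Real.pi * v) : ℝ) : ℂ)⁻¹ *
        (Complex.exp (Complex.I * (t:ℂ) * (y:ℂ)) *
          Complex.exp (-((((2 * (v:ℝ))⁻¹ : ℝ)) : ℂ) * (y:ℂ) ^ 2)) := by
    intro y
    rw [gaussianPDFReal]
    push_cast
    rw [mul_assoc, ← Complex.exp_add, ← Complex.exp_add]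
    congr 1
    ring
  simp_rw [heq]
  rw [MeasureTheory.integral_const_mul]
  have hb : (0:ℝ) < ((((2 * (v:ℝ))⁻¹ : ℝ)) : ℂ).re := by
    simp; positivity
  rw [fourierIntegral_gaussian hb (t : ℂ)]
  have hπb : ((Real.pi : ℂ)) / ((((2 * (v:ℝ))⁻¹ : ℝ)) : ℂ) = ((2 * Real.pi * v : ℝ) : ℂ) := by
    push_cast
    field_simp
  rw [hπb]
  have hsq : ((2 * Real.pi * (v:ℝ) : ℝ) : ℂ) ^ (1/2 : ℂ) = ((Real.sqrt (2 * Real.pi * v) : ℝ) : ℂ) := by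
    rw [show (1/2 : ℂ) = ((1/2 : ℝ) : ℂ) by push_cast; ring, ← Complex.ofReal_cpow h2v.le,
      ← Real.sqrt_eq_rpow]
  rw [hsq, ← mul_assoc, inv_mul_cancel₀ (by
      exact_mod_cast Real.sqrt_ne_zero'.2 h2v), one_mul]
  congr 1
  push_cast
  field_simp
  ring

lemma laplace_sq_gaussianReal (v : ℝ≥0) (hv : v ≠ 0) (c : ℝ) (hc : 0 ≤ c) :
    ∫ y, Complex.exp (-(c * y ^ 2 / 2 : ℝ)) ∂(gaussianReal 0 v)
      = (((Real.sqrt (1 + c * v))⁻¹ : ℝ) : ℂ) := by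
  have hv' : (0:ℝ) < (v : ℝ) := lt_of_le_of_ne (v.coe_nonneg) (by exact_mod_cast (Ne.symm hv))
  have h2v : (0:ℝ) < 2 * Real.pi * v := by positivity
  set b : ℝ := c / 2 + (2 * (v:ℝ))⁻¹ with hbdef
  have hbpos : (0:ℝ) < b := by positivity
  rw [integral_gaussianReal_eq v hv]
  have heq : ∀ y : ℝ, (gaussianPDFReal 0 v y : ℂ) * Complex.exp (-(c * y ^ 2 / 2 : ℝ))
      = ((Real.sqrt (2 * Real.pi * v) : ℝ) : ℂ)⁻¹ *
        (Complex.exp (Complex.I * (0:ℂ) * (y:ℂ)) *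
          Complex.exp (-((b : ℝ) : ℂ) * (y:ℂ) ^ 2)) := by
    intro y
    rw [hbdef, gaussianPDFReal]
    push_cast
    rw [mul_assoc, ← Complex.exp_add, ← Complex.exp_add]
    congr 1
    push_cast
    ring
  simp_rw [heq]
  rw [MeasureTheory.integral_const_mul]
  have hb : (0:ℝ) < (((b:ℝ)) : ℂ).re := by simpa using hbpos
  rw [fourierIntegral_gaussian hb (0 : ℂ)]
  have hπb : ((Real.pi : ℂ)) / ((b : ℝ) : ℂ) = ((Real.pi / b : ℝ) : ℂ) := by push_cast; ring
  have hfac : (Real.pi / b : ℝ) = (2 * Real.pi * v) * (1 + c * v)⁻¹ := by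
    rw [hbdef]
    have h1 : (0:ℝ) < 1 + c * v := by positivity
    field_simp
    ring
  have hsq : ((Real.pi / b : ℝ) : ℂ) ^ (1/2 : ℂ) = ((Real.sqrt (Real.pi / b) : ℝ) : ℂ) := by
    rw [show (1/2 : ℂ) = ((1/2 : ℝ) : ℂ) by push_cast; ring,
      ← Complex.ofReal_cpow (by positivity) , ← Real.sqrt_eq_rpow]
  rw [hπb, hsq]
  have h1 : (0:ℝ) < 1 + c * v := by positivity
  have : Real.sqrt (Real.pi / b) = Real.sqrt (2 * Real.pi * v) * (Real.sqrt (1 + c * v))⁻¹ := by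
    rw [hfac, Real.sqrt_mul h2v.le, Real.sqrt_inv]
  rw [this]
  simp only [neg_zero, zero_pow, ne_eq, OfNat.ofNat_ne_zero, not_false_eq_true, zero_div,
    Complex.exp_zero, mul_one]
  push_cast
  rw [← mul_assoc, inv_mul_cancel₀ (by exact_mod_cast Real.sqrt_ne_zero'.2 h2v), one_mul]

set_option maxHeartbeats 2000000 in
/-- Shallow linear Gaussian network with hidden width 2: if the entries of `M ∈ ℝ^{2×D}` are
i.i.d. `N(0, σ₁²)`, the entries of the row vector `W ∈ ℝ^{1×2}` are i.i.d. `N(0, σ₂²)`,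
`W` is independent of `M`, and `x ≠ 0`, then the characteristic
function of `f = W M x` is `E[exp(i q f)] = 1/(1 + κ² q²)`, `κ = σ₁ σ₂ ‖x‖`. -/
theorem stmt1 {Ω : Type*} [MeasurableSpace Ω] (μ : Measure Ω) [IsProbabilityMeasure μ]
    (D : ℕ) (hD : 1 ≤ D) (σ₁ σ₂ : ℝ) (hσ₁ : 0 < σ₁) (hσ₂ : 0 < σ₂)
    (x : Fin D → ℝ) (hx : x ≠ 0)
    (M : Ω → Fin 2 → Fin D → ℝ) (W : Ω → Fin 2 → ℝ)
    (hMmeas : Measurable M) (hWmeas : Measurable W)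
    (hMindep : iIndepFun
      (fun (p : Fin 2 × Fin D) ω => M ω p.1 p.2) μ)
    (hMdist : ∀ p : Fin 2 × Fin D,
      Measure.map (fun ω => M ω p.1 p.2) μ = gaussianReal 0 (Real.toNNReal (σ₁ ^ 2)))
    (hWindep : iIndepFun (fun (i : Fin 2) ω => W ω i) μ)
    (hWdist : ∀ i : Fin 2,
      Measure.map (fun ω => W ω i) μ = gaussianReal 0 (Real.toNNReal (σ₂ ^ 2)))
    (hMW : IndepFun M W μ) :
    ∀ q : ℝ,
      ∫ ω, Complex.exp (Complex.I * q * (∑ i, W ω i * ∑ j, M ω i j * x j)) ∂μ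
        = 1 / (1 + (σ₁ * σ₂ * Real.sqrt (∑ j, x j ^ 2)) ^ 2 * q ^ 2) := by
  intro q
  set v₁ : ℝ≥0 := (σ₁ ^ 2).toNNReal with hv₁def
  set v₂ : ℝ≥0 := (σ₂ ^ 2).toNNReal with hv₂def
  have hv₁ : v₁ ≠ 0 := (Real.toNNReal_pos.2 (by positivity)).ne'
  have hv₂ : v₂ ≠ 0 := (Real.toNNReal_pos.2 (by positivity)).ne'
  have hv₁c : ((v₁ : ℝ)) = σ₁ ^ 2 := Real.coe_toNNReal _ (sq_nonneg _)
  have hv₂c : ((v₂ : ℝ)) = σ₂ ^ 2 := Real.coe_toNNReal _ (sq_nonneg _)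
  set nx : ℝ := ∑ j, x j ^ 2 with hnxdef
  have hnx : 0 ≤ nx := Finset.sum_nonneg fun j _ => sq_nonneg _
  set c : ℝ := σ₁ ^ 2 * q ^ 2 * nx with hcdef
  have hc : 0 ≤ c := by positivity
  -- the bounded integrand
  obtain ⟨H, hHdef⟩ : ∃ H' : (Fin 2 → ℝ) × (Fin 2 → Fin D → ℝ) → ℂ,
      H' = fun p => Complex.exp (((q * ∑ i, p.1 i * ∑ j, p.2 i j * x j : ℝ) : ℂ) * Complex.I) :=
    ⟨_, rfl⟩
  have hrmeas : Measurable (fun p : (Fin 2 → ℝ) × (Fin 2 → Fin D → ℝ) =>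
      (q * ∑ i, p.1 i * ∑ j, p.2 i j * x j : ℝ)) := by fun_prop
  have hHmeas : Measurable H := by
    rw [hHdef]
    exact Complex.measurable_exp.comp ((Complex.measurable_ofReal.comp hrmeas).mul_const _)
  have hWM : Measurable (fun ω => (W ω, M ω)) := hWmeas.prodMk hMmeas
  haveI : IsProbabilityMeasure (μ.map W) := Measure.isProbabilityMeasure_map hWmeas.aemeasurable
  haveI : IsProbabilityMeasure (μ.map M) := Measure.isProbabilityMeasure_map hMmeas.aemeasurable
  have hpair : Measure.map (fun ω => (W ω, M ω)) μ = (μ.map W).prod (μ.map M) :=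
    (indepFun_iff_map_prod_eq_prod_map_map hWmeas.aemeasurable hMmeas.aemeasurable).1 hMW.symm
  have hint : Integrable H ((μ.map W).prod (μ.map M)) := by
    refine (integrable_const (1:ℝ)).mono' hHmeas.aestronglyMeasurable ?_
    refine Filter.Eventually.of_forall fun p => ?_
    simp only [hHdef]
    exact le_of_eq (Complex.norm_exp_ofReal_mul_I _)
  -- Step 0: rewrite the integrand
  have h0 : (∫ ω, Complex.exp (Complex.I * q * (∑ i, W ω i * ∑ j, M ω i j * x j)) ∂μ)
      = ∫ ω, H (W ω, M ω) ∂μ := by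
    refine integral_congr_ae (Filter.Eventually.of_forall fun ω => ?_)
    simp only [hHdef]
    congr 1
    push_cast
    ring
  rw [h0]
  -- Step A: Fubini
  have hA : ∫ ω, H (W ω, M ω) ∂μ = ∫ w, ∫ m, H (w, m) ∂(μ.map M) ∂(μ.map W) := by
    rw [← integral_map hWM.aemeasurable hHmeas.aestronglyMeasurable, hpair,
      integral_prod _ hint]
  rw [hA]
  -- φ: the inner result as a function of w i
  obtain ⟨φ, hφdef⟩ : ∃ φ' : ℝ → ℂ, φ' = fun s => Complex.exp (-(c * s ^ 2 / 2 : ℝ)) :=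
    ⟨_, rfl⟩
  have hφmeas : Measurable φ := by
    rw [hφdef]
    exact Complex.measurable_exp.comp
      ((Complex.measurable_ofReal.comp (by fun_prop : Measurable fun s : ℝ => c * s ^ 2 / 2)).neg)
  -- Step B: inner integral
  have hB : ∀ w : Fin 2 → ℝ, ∫ m, H (w, m) ∂(μ.map M) = ∏ i, φ (w i) := by
    intro w
    have hHw : Measurable (fun m => H (w, m)) := hHmeas.comp measurable_prodMk_left
    rw [integral_map hMmeas.aemeasurable hHw.aestronglyMeasurable]
    have hsum : ∀ m : Fin 2 → Fin D → ℝ,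
        q * ∑ i, w i * ∑ j, m i j * x j
          = ∑ p : Fin 2 × Fin D, q * w p.1 * x p.2 * m p.1 p.2 := by
      intro m
      rw [Fintype.sum_prod_type, Finset.mul_sum]
      refine Finset.sum_congr rfl fun i _ => ?_
      rw [Finset.mul_sum, Finset.mul_sum]
      refine Finset.sum_congr rfl fun j _ => ?_
      ring
    have hexp : ∀ m : Fin 2 → Fin D → ℝ, H (w, m)
        = ∏ p : Fin 2 × Fin D,
            Complex.exp (((q * w p.1 * x p.2) * m p.1 p.2 : ℝ) * Complex.I) := by
      intro m
      simp only [hHdef]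
      rw [hsum m, ← Complex.exp_sum]
      congr 1
      rw [Complex.ofReal_sum, Finset.sum_mul]
    simp_rw [hexp]
    have key := iIndep_integral_prod
      (f := fun (p : Fin 2 × Fin D) (ω : Ω) => M ω p.1 p.2)
      (fun p => ((measurable_pi_apply p.2).comp ((measurable_pi_apply p.1).comp hMmeas)))
      hMindep
      (fun p y => Complex.exp ((q * w p.1 * x p.2 * y : ℝ) * Complex.I))
      (fun p => Complex.measurable_exp.comp
        ((Complex.measurable_ofReal.comp
          (by fun_prop : Measurable fun y : ℝ => q * w p.1 * x p.2 * y)).mul_const _))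
    rw [key]
    have hfac : ∀ p : Fin 2 × Fin D,
        ∫ ω, Complex.exp ((q * w p.1 * x p.2 * M ω p.1 p.2 : ℝ) * Complex.I) ∂μ
          = Complex.exp (-(((v₁ : ℝ) * (q * w p.1 * x p.2) ^ 2 / 2 : ℝ) : ℂ)) := by
      intro p
      have hm : Measurable (fun y : ℝ =>
          Complex.exp ((q * w p.1 * x p.2 * y : ℝ) * Complex.I)) :=
        Complex.measurable_exp.comp ((Complex.measurable_ofReal.comp
          (by fun_prop : Measurable fun y : ℝ => q * w p.1 * x p.2 * y)).mul_const _)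
      have hmap := integral_map (μ := μ)
        (φ := fun ω => M ω p.1 p.2)
        ((measurable_pi_apply p.2).comp ((measurable_pi_apply p.1).comp hMmeas)).aemeasurable
        (f := fun y : ℝ => Complex.exp ((q * w p.1 * x p.2 * y : ℝ) * Complex.I))
        hm.aestronglyMeasurable
      rw [hMdist p] at hmap
      rw [← hmap]
      exact char_gaussianReal v₁ hv₁ (q * w p.1 * x p.2)
    rw [Finset.prod_congr rfl (fun p _ => hfac p)]
    simp_rw [hv₁c, ← Complex.exp_sum]
    have hre : ∑ p : Fin 2 × Fin D, -((σ₁ ^ 2 * (q * w p.1 * x p.2) ^ 2 / 2 : ℝ) : ℂ)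
        = ∑ i : Fin 2, -((c * w i ^ 2 / 2 : ℝ) : ℂ) := by
      have hreal : ∑ p : Fin 2 × Fin D, -(σ₁ ^ 2 * (q * w p.1 * x p.2) ^ 2 / 2)
          = ∑ i : Fin 2, -(c * w i ^ 2 / 2) := by
        rw [Fintype.sum_prod_type]
        refine Finset.sum_congr rfl fun i _ => ?_
        have hj : ∀ j, -(σ₁ ^ 2 * (q * w i * x j) ^ 2 / 2)
            = -(σ₁ ^ 2 * q ^ 2 * w i ^ 2 / 2) * x j ^ 2 := fun j => by ring
        simp_rw [hj, ← Finset.mul_sum, ← hnxdef, hcdef]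
        ring
      calc ∑ p : Fin 2 × Fin D, -((σ₁ ^ 2 * (q * w p.1 * x p.2) ^ 2 / 2 : ℝ) : ℂ)
          = ((∑ p : Fin 2 × Fin D, -(σ₁ ^ 2 * (q * w p.1 * x p.2) ^ 2 / 2) : ℝ) : ℂ) := by
            push_cast; ring
        _ = ((∑ i : Fin 2, -(c * w i ^ 2 / 2) : ℝ) : ℂ) := by rw [hreal]
        _ = ∑ i : Fin 2, -((c * w i ^ 2 / 2 : ℝ) : ℂ) := by push_cast; ring
    rw [hre, Complex.exp_sum]
    simp only [hφdef]
  simp_rw [hB]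
  -- Step C: outer integral
  have hC : ∫ w, ∏ i, φ (w i) ∂(μ.map W) = ∏ i : Fin 2, ∫ y, φ y ∂(gaussianReal 0 v₂) := by
    have hm : Measurable (fun w : Fin 2 → ℝ => ∏ i, φ (w i)) :=
      Finset.measurable_prod Finset.univ fun i _ => hφmeas.comp (measurable_pi_apply i)
    rw [integral_map hWmeas.aemeasurable hm.aestronglyMeasurable]
    have key := iIndep_integral_prod
      (f := fun (i : Fin 2) (ω : Ω) => W ω i)
      (fun i => (measurable_pi_apply i).comp hWmeas) hWindep
      (fun _ => φ) (fun _ => hφmeas)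
    rw [key]
    refine Finset.prod_congr rfl fun i _ => ?_
    have hmap := integral_map (μ := μ) (φ := fun ω => W ω i)
      ((measurable_pi_apply i).comp hWmeas).aemeasurable
      (f := φ) hφmeas.aestronglyMeasurable
    rw [hWdist i] at hmap
    exact hmap.symm
  rw [hC]
  have hlap : ∫ y, φ y ∂(gaussianReal 0 v₂)
      = (((Real.sqrt (1 + c * v₂))⁻¹ : ℝ) : ℂ) := by
    rw [hφdef]
    exact laplace_sq_gaussianReal v₂ hv₂ c hc
  rw [hlap, Fin.prod_const]
  -- final arithmetic
  have h1cv : (0:ℝ) < 1 + c * v₂ := by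
    have h2 : (0:ℝ) ≤ c * v₂ := mul_nonneg hc v₂.coe_nonneg
    linarith
  have hfin : ((((Real.sqrt (1 + c * v₂))⁻¹ : ℝ) : ℂ)) ^ 2
      = 1 / ((1 + c * (v₂ : ℝ) : ℝ) : ℂ) := by
    rw [← Complex.ofReal_pow, inv_pow, sq, Real.mul_self_sqrt h1cv.le,
      Complex.ofReal_inv]
    push_cast
    ring
  rw [hfin]
  congr 1
  rw [hcdef, hv₂c]
  push_cast
  have hsq : ((Real.sqrt nx : ℝ) : ℂ) ^ 2 = ((nx : ℝ) : ℂ) := by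
    rw [← Complex.ofReal_pow, Real.sq_sqrt hnx]
  rw [← hsq]
  ring
end

section
/- Let D ≥ 1, σ > 0, x ∈ ℝ^D and a phase value ψ ∈ ℝ. Let w^c, w^s be i.i.d. N(0, σ²), and let ω ∈ ℝ^D be an independent random vector with distribution N(0, Λ) for a positive semidefinite Λ. Define the phase-shifted trigonometric unit f = w^c cos(ω·x + ψ) + w^s sin(ω·x − ψ). Then for every q ∈ ℝ, the characteristic function satisfies E[exp(i q f)] = exp(−½ q² σ²) · E_ω[exp(½ q² σ² sin(2ψ) sin(2 ω·x))]. In particular, whenever sin(2ψ) ≠ 0 this characteristic function is not that of a Gaussian unless sin(2ω·x) = 0 almost surely. -/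
open MeasureTheory ProbabilityTheory Real Matrix
open scoped ENNReal NNReal

lemma gauss_char (v : ℝ≥0) (t : ℝ) :
    ∫ w : ℝ, Complex.exp (Complex.I * t * w) ∂(gaussianReal 0 v) =
      ((Real.exp (-(v : ℝ) * t ^ 2 / 2) : ℝ) : ℂ) := by
  by_cases hv : v = 0
  · simp [hv, gaussianReal_zero_var, integral_dirac]
  · rw [gaussianReal_of_var_ne_zero _ hv]
    have hv0 : (0:ℝ) < v := lt_of_le_of_ne v.2 (by exact_mod_cast (Ne.symm hv))
    have hmeas : Measurable (fun w : ℝ => (gaussianPDFReal 0 v w).toNNReal) :=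
      (measurable_gaussianPDFReal 0 v).real_toNNReal
    have hpdf : gaussianPDF 0 v = fun w => ((gaussianPDFReal 0 v w).toNNReal : ℝ≥0∞) := by
      funext w; simp [gaussianPDF_def, ENNReal.ofReal]
    rw [hpdf, integral_withDensity_eq_integral_smul hmeas]
    have hnn : ∀ w : ℝ, (0:ℝ) ≤ gaussianPDFReal 0 v w := gaussianPDFReal_nonneg 0 v
    have heq : ∀ w : ℝ, ((gaussianPDFReal 0 v w).toNNReal : ℝ≥0) • Complex.exp (Complex.I * t * w)
        = ((√(2 * π * v))⁻¹ : ℂ) * Complex.exp ((-(1/(2*(v:ℝ))) : ℂ) * w ^ 2 + (Complex.I * t) * w + 0) := by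
      intro w
      rw [NNReal.smul_def, Real.coe_toNNReal _ (hnn w), gaussianPDFReal_def]
      simp only [Complex.real_smul]
      push_cast
      rw [mul_assoc, ← Complex.exp_add]
      congr 2
      ring
    simp_rw [heq]
    rw [integral_const_mul, integral_cexp_quadratic (by
      norm_num
      positivity) _ _]
    have hcpow : ((π : ℂ) / -(-(1/(2*(v:ℝ))) : ℂ)) ^ (1/2 : ℂ) = ((√(2 * π * v) : ℝ) : ℂ) := by
      rw [neg_neg]
      rw [show ((π:ℂ) / (1/(2*(v:ℝ)))) = (((2 * π * (v:ℝ) : ℝ)) : ℂ) by push_cast; field_simp]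
      rw [Real.sqrt_eq_rpow, Complex.ofReal_cpow (by positivity)]
      norm_num
    rw [hcpow]
    have hsq : (0:ℝ) < √(2 * π * v) := by positivity
    rw [show ((0:ℂ) - (Complex.I * t)^2 / (4 * -(1/(2*(v:ℝ))))) = ((-(v:ℝ) * t^2/2 : ℝ) : ℂ) by
      rw [mul_pow, Complex.I_sq]
      push_cast
      field_simp
      ring]
    rw [← mul_assoc, ← Complex.ofReal_inv, ← Complex.ofReal_mul, inv_mul_cancel₀ hsq.ne',
      Complex.ofReal_one, one_mul, Complex.ofReal_exp]

lemma iIndepFun_congr_ae {Ω ι : Type*} {β : ι → Type*} [MeasurableSpace Ω] {μ : Measure Ω}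
    (m : ∀ i, MeasurableSpace (β i)) {f g : ∀ i, Ω → β i}
    (h : ∀ i, f i =ᵐ[μ] g i) (hf : iIndepFun (m := m) f μ) : iIndepFun (m := m) g μ := by
  rw [iIndepFun_iff_measure_inter_preimage_eq_mul] at hf ⊢
  intro S sets hsets
  have hae : ∀ᵐ ω ∂μ, ∀ i ∈ S, f i ω = g i ω :=
    (MeasureTheory.ae_ball_iff S.countable_toSet).2 fun i _ => h i
  have h1 : μ (⋂ i ∈ S, (g i) ⁻¹' (sets i)) = μ (⋂ i ∈ S, (f i) ⁻¹' (sets i)) := by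
    refine measure_congr ?_
    filter_upwards [hae] with ω hω
    show (ω ∈ ⋂ i ∈ S, (g i) ⁻¹' (sets i)) = (ω ∈ ⋂ i ∈ S, (f i) ⁻¹' (sets i))
    simp only [eq_iff_iff, Set.mem_iInter, Set.mem_preimage]
    exact ⟨fun hh i hi => (hω i hi) ▸ hh i hi, fun hh i hi => (hω i hi).symm ▸ hh i hi⟩
  have h2 : ∀ i ∈ S, μ ((g i) ⁻¹' (sets i)) = μ ((f i) ⁻¹' (sets i)) := by
    intro i hi
    refine measure_congr ?_
    filter_upwards [h i] with ω hω
    show (ω ∈ (g i) ⁻¹' (sets i)) = (ω ∈ (f i) ⁻¹' (sets i))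
    simp only [eq_iff_iff, Set.mem_preimage, hω]
  rw [h1, hf S hsets]
  exact (Finset.prod_congr rfl h2).symm

lemma countable_sin_eq (k : ℝ) : Set.Countable {y : ℝ | Real.sin (2 * y) = k} := by
  have hπ := Real.pi_pos
  have hsub : {y : ℝ | Real.sin (2 * y) = k} ⊆
      ⋃ n : ℤ, {y : ℝ | Real.sin (2 * y) = k} ∩
        Set.Icc ((n * π - π/2)/2) ((n * π + π/2)/2) := by
    intro y hy
    simp only [Set.mem_iUnion, Set.mem_inter_iff, Set.mem_Icc]
    have h := abs_sub_round (2 * y / π)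
    rw [abs_sub_le_iff] at h
    have hy2 : (2*y/π)*π = 2*y := div_mul_cancel₀ _ hπ.ne'
    refine ⟨round (2 * y / π), hy, ?_, ?_⟩
    · nlinarith [mul_le_mul_of_nonneg_right h.2 hπ.le]
    · nlinarith [mul_le_mul_of_nonneg_right h.1 hπ.le]
  refine Set.Countable.mono hsub (Set.countable_iUnion fun n => ?_)
  refine Set.Subsingleton.countable ?_
  rintro y₁ ⟨hy₁, hy₁'⟩ y₂ ⟨hy₂, hy₂'⟩
  simp only [Set.mem_setOf_eq, Set.mem_Icc] at *
  have key : ∀ z : ℝ, Real.sin (2 * z) = -((-1:ℝ)^n * Real.sin (n * π - 2 * z)) := by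
    intro z
    rw [← Real.sin_int_mul_pi_sub]
    congr 1
    ring
  have hmem : ∀ z : ℝ, (n * π - π/2)/2 ≤ z → z ≤ (n * π + π/2)/2 →
      ((n:ℝ) * π - 2 * z) ∈ Set.Icc (-(π/2)) (π/2) := by
    intro z h1 h2
    constructor <;> nlinarith
  have e1 := key y₁
  have e2 := key y₂
  rw [hy₁] at e1
  rw [hy₂] at e2
  have hpow : ((-1:ℝ)^n) ≠ 0 := zpow_ne_zero n (by norm_num)
  have heq : ((-1:ℝ)^n) * Real.sin ((n:ℝ) * π - 2 * y₁)
      = ((-1:ℝ)^n) * Real.sin ((n:ℝ) * π - 2 * y₂) := by linarith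
  have hsin := mul_left_cancel₀ hpow heq
  have := Real.injOn_sin (hmem y₁ hy₁'.1 hy₁'.2) (hmem y₂ hy₂'.1 hy₂'.2) hsin
  linarith

/-- Phase-shifted trigonometric unit: with independent `w^c, w^s ~ N(0,σ²)` and Gaussian
feature `ω ~ N(0,Λ)` (linear-functional characterization), the unit
`f = w^c cos(ω·x + ψ) + w^s sin(ω·x − ψ)` has characteristic function
`E[exp(iqf)] = exp(−½q²σ²) E_ω[exp(½q²σ² sin(2ψ) sin(2ω·x))]`; in particular, if
`sin(2ψ) ≠ 0` then `f` can only be Gaussian when `sin(2ω·x) = 0` almost surely. -/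
theorem stmt9 {Ω : Type*} [MeasurableSpace Ω] (μ : Measure Ω) [IsProbabilityMeasure μ]
    (D : ℕ) (hD : 1 ≤ D) (σ : ℝ) (hσ : 0 < σ) (x : Fin D → ℝ) (ψ : ℝ)
    (Λ : Matrix (Fin D) (Fin D) ℝ) (hΛ : Λ.PosSemidef)
    (wc ws : Ω → ℝ) (freq : Ω → Fin D → ℝ)
    (hmeas : Measurable freq)
    (hindep : iIndepFun
      (β := Sum.elim (fun _ : Fin 2 => ℝ) (fun _ : Unit => Fin D → ℝ))
      (m := fun i => match i with
        | Sum.inl _ => inferInstanceAs (MeasurableSpace ℝ)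
        | Sum.inr _ => inferInstanceAs (MeasurableSpace (Fin D → ℝ)))
      (fun i => match i with
        | Sum.inl ⟨0, _⟩ => wc
        | Sum.inl ⟨1, _⟩ => ws
        | Sum.inr _ => freq) μ)
    (hwc : Measure.map wc μ = gaussianReal 0 (Real.toNNReal (σ ^ 2)))
    (hws : Measure.map ws μ = gaussianReal 0 (Real.toNNReal (σ ^ 2)))
    (hfreq : ∀ t : Fin D → ℝ,
      Measure.map (fun ω => freq ω ⬝ᵥ t) μ
        = gaussianReal 0 (Real.toNNReal (t ⬝ᵥ Λ.mulVec t))) :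
    (∀ q : ℝ,
      ∫ ω, Complex.exp (Complex.I * q *
          (wc ω * Real.cos (freq ω ⬝ᵥ x + ψ) + ws ω * Real.sin (freq ω ⬝ᵥ x - ψ))) ∂μ
        = (Real.exp (-(1 / 2) * q ^ 2 * σ ^ 2) *
            ∫ ω, Real.exp ((1 / 2) * q ^ 2 * σ ^ 2
              * Real.sin (2 * ψ) * Real.sin (2 * (freq ω ⬝ᵥ x))) ∂μ : ℝ))
    ∧ (Real.sin (2 * ψ) ≠ 0 →
        ∀ m : ℝ, ∀ v : ℝ≥0,
          Measure.map (fun ω =>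
              wc ω * Real.cos (freq ω ⬝ᵥ x + ψ) + ws ω * Real.sin (freq ω ⬝ᵥ x - ψ)) μ
            = gaussianReal m v →
          ∀ᵐ ω ∂μ, Real.sin (2 * (freq ω ⬝ᵥ x)) = 0) := by
  classical
  have hdot : Measurable (fun y : Fin D → ℝ => y ⬝ᵥ x) := by
    show Measurable fun y : Fin D → ℝ => ∑ i, y i * x i
    exact Finset.measurable_sum _ fun i _ => (measurable_pi_apply i).mul_const _
  have hθmeas : Measurable (fun ω => freq ω ⬝ᵥ x) := hdot.comp hmeas
  have hwc_ae : AEMeasurable wc μ := by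
    by_contra hc
    have h0 : (gaussianReal 0 (Real.toNNReal (σ ^ 2)) : Measure ℝ) = 0 := by
      rw [← hwc]; exact Measure.map_of_not_aemeasurable hc
    exact IsProbabilityMeasure.ne_zero _ h0
  have hws_ae : AEMeasurable ws μ := by
    by_contra hc
    have h0 : (gaussianReal 0 (Real.toNNReal (σ ^ 2)) : Measure ℝ) = 0 := by
      rw [← hws]; exact Measure.map_of_not_aemeasurable hc
    exact IsProbabilityMeasure.ne_zero _ h0
  obtain ⟨wc', hwc'meas, hwc'ae⟩ := hwc_ae
  obtain ⟨ws', hws'meas, hws'ae⟩ := hws_ae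
  set mfam : ∀ i : (Fin 2) ⊕ Unit,
      MeasurableSpace ((Sum.elim (fun _ : Fin 2 => ℝ) (fun _ : Unit => (Fin D → ℝ))) i) :=
    (fun i => match i with
      | Sum.inl _ => inferInstanceAs (MeasurableSpace ℝ)
      | Sum.inr _ => inferInstanceAs (MeasurableSpace (Fin D → ℝ))) with hmfam
  set G : ∀ i : (Fin 2) ⊕ Unit, Ω → (Sum.elim (fun _ : Fin 2 => ℝ) (fun _ : Unit => (Fin D → ℝ))) i :=
    (fun i => match i with
      | Sum.inl ⟨0, _⟩ => wc'
      | Sum.inl ⟨1, _⟩ => ws'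
      | Sum.inr _ => freq) with hGdef
  have hGmeas : ∀ i, @Measurable _ _ _ (mfam i) (G i) := by
    rintro (⟨j, hj⟩ | ⟨⟩)
    · interval_cases j
      · exact hwc'meas
      · exact hws'meas
    · exact hmeas
  have hae : ∀ i : (Fin 2) ⊕ Unit,
      ((fun i => match i with
        | Sum.inl ⟨0, _⟩ => wc
        | Sum.inl ⟨1, _⟩ => ws
        | Sum.inr _ => freq) :
        ∀ i : (Fin 2) ⊕ Unit, Ω → (Sum.elim (fun _ : Fin 2 => ℝ) (fun _ : Unit => (Fin D → ℝ))) i) i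
        =ᵐ[μ] G i := by
    rintro (⟨j, hj⟩ | ⟨⟩)
    · interval_cases j
      · exact hwc'ae
      · exact hws'ae
    · exact Filter.EventuallyEq.rfl
  have hindep' : iIndepFun (m := mfam) G μ := iIndepFun_congr_ae mfam hae hindep
  have hpairfreq : IndepFun (fun ω => (wc' ω, ws' ω)) freq μ :=
    hindep'.indepFun_prodMk hGmeas (Sum.inl 0) (Sum.inl 1) (Sum.inr ()) (by simp) (by simp)
  have hpair : IndepFun wc' ws' μ :=
    hindep'.indepFun (show (Sum.inl 0 : Fin 2 ⊕ Unit) ≠ Sum.inl 1 by simp)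
  set γ : Measure ℝ := gaussianReal 0 (Real.toNNReal (σ ^ 2)) with hγdef
  have hwc' : Measure.map wc' μ = γ := by rw [← Measure.map_congr hwc'ae]; exact hwc
  have hws' : Measure.map ws' μ = γ := by rw [← Measure.map_congr hws'ae]; exact hws
  set ν : Measure (Fin D → ℝ) := Measure.map freq μ with hνdef
  haveI : IsProbabilityMeasure ν := Measure.isProbabilityMeasure_map hmeas.aemeasurable
  have hprodmap : Measure.map (fun ω => (wc' ω, ws' ω)) μ = γ.prod γ := by
    have h := (indepFun_iff_map_prod_eq_prod_map_map hwc'meas.aemeasurable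
      hws'meas.aemeasurable).1 hpair
    rw [h, hwc', hws']
  have hjoint : Measure.map (fun ω => ((wc' ω, ws' ω), freq ω)) μ = (γ.prod γ).prod ν := by
    rw [← hprodmap, hνdef]
    exact (indepFun_iff_map_prod_eq_prod_map_map (hwc'meas.prodMk hws'meas).aemeasurable
      hmeas.aemeasurable).1 hpairfreq
  have trig : ∀ t : ℝ, Real.cos (t + ψ)^2 + Real.sin (t - ψ)^2
      = 1 - Real.sin (2*t) * Real.sin (2*ψ) := by
    intro t
    rw [Real.cos_add, Real.sin_sub, Real.sin_two_mul, Real.sin_two_mul]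
    nlinarith [Real.sin_sq_add_cos_sq t, Real.sin_sq_add_cos_sq ψ]
  have hσ2 : ((Real.toNNReal (σ ^ 2) : ℝ≥0) : ℝ) = σ ^ 2 := Real.coe_toNNReal _ (sq_nonneg σ)
  have key : ∀ q : ℝ,
      ∫ ω, Complex.exp (Complex.I * q *
          (wc ω * Real.cos (freq ω ⬝ᵥ x + ψ) + ws ω * Real.sin (freq ω ⬝ᵥ x - ψ))) ∂μ
        = (Real.exp (-(1 / 2) * q ^ 2 * σ ^ 2) *
            ∫ ω, Real.exp ((1 / 2) * q ^ 2 * σ ^ 2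
              * Real.sin (2 * ψ) * Real.sin (2 * (freq ω ⬝ᵥ x))) ∂μ : ℝ) := by
    intro q
    set R : (ℝ × ℝ) × (Fin D → ℝ) → ℝ := fun p =>
      p.1.1 * Real.cos (p.2 ⬝ᵥ x + ψ) + p.1.2 * Real.sin (p.2 ⬝ᵥ x - ψ) with hRdef
    set Φ : (ℝ × ℝ) × (Fin D → ℝ) → ℂ := fun p =>
      Complex.exp (Complex.I * q * ((R p : ℝ) : ℂ)) with hΦdef
    have hRmeas : Measurable R := by
      apply Measurable.add
      · exact (measurable_fst.fst).mul
          (Real.measurable_cos.comp ((hdot.comp measurable_snd).add_const ψ))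
      · exact (measurable_fst.snd).mul
          (Real.measurable_sin.comp ((hdot.comp measurable_snd).sub_const ψ))
    have hΦmeas : Measurable Φ :=
      Complex.measurable_exp.comp (measurable_const.mul (Complex.measurable_ofReal.comp hRmeas))
    have hnorm1 : ∀ r : ℝ, ‖Complex.exp (Complex.I * q * (r:ℂ))‖ = 1 := by
      intro r
      rw [Complex.norm_exp]
      have : (Complex.I * q * (r:ℂ)).re = 0 := by simp
      rw [this, Real.exp_zero]
    have hΦint : Integrable Φ ((γ.prod γ).prod ν) := by
      refine Integrable.mono' (integrable_const 1) hΦmeas.aestronglyMeasurable ?_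
      exact Filter.Eventually.of_forall fun p => le_of_eq (hnorm1 (R p))
    set g : ℝ → ℝ := fun t => Real.exp (-(1 / 2) * q ^ 2 * σ ^ 2) *
      Real.exp ((1 / 2) * q ^ 2 * σ ^ 2 * Real.sin (2 * ψ) * Real.sin (2 * t)) with hgdef
    have hgmeas : Measurable g := by
      apply Measurable.mul measurable_const
      exact Real.measurable_exp.comp ((Real.measurable_sin.comp
        (measurable_id.const_mul 2)).const_mul _)
    have hshape : ∀ (w1 w2 : ℝ) (y : Fin D → ℝ),
        Complex.exp (Complex.I * q * ((w1 : ℂ) * (Real.cos (y ⬝ᵥ x + ψ) : ℂ)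
          + (w2 : ℂ) * (Real.sin (y ⬝ᵥ x - ψ) : ℂ))) = Φ ((w1, w2), y) := by
      intro w1 w2 y
      simp only [hΦdef, hRdef]
      push_cast
      ring_nf
    calc
      ∫ ω, Complex.exp (Complex.I * q *
          (wc ω * Real.cos (freq ω ⬝ᵥ x + ψ) + ws ω * Real.sin (freq ω ⬝ᵥ x - ψ))) ∂μ
        = ∫ ω, Φ ((wc' ω, ws' ω), freq ω) ∂μ := by
          simp_rw [hshape]
          refine integral_congr_ae ?_
          filter_upwards [hwc'ae, hws'ae] with ω h1 h2
          rw [h1, h2]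
      _ = ∫ p, Φ p ∂((γ.prod γ).prod ν) := by
          rw [← hjoint]
          exact (integral_map ((hwc'meas.prodMk hws'meas).prodMk hmeas).aemeasurable
            hΦmeas.aestronglyMeasurable).symm
      _ = ∫ y, (∫ p : ℝ × ℝ, Φ (p, y) ∂(γ.prod γ)) ∂ν := integral_prod_symm _ hΦint
      _ = ∫ y, ((g (y ⬝ᵥ x) : ℝ) : ℂ) ∂ν := by
          refine integral_congr_ae (Filter.Eventually.of_forall fun y => ?_)
          have step1 : ∀ p : ℝ × ℝ, Φ (p, y)
              = Complex.exp (Complex.I * ((q * Real.cos (y ⬝ᵥ x + ψ) : ℝ) : ℂ) * (p.1 : ℂ))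
                * Complex.exp (Complex.I * ((q * Real.sin (y ⬝ᵥ x - ψ) : ℝ) : ℂ) * (p.2 : ℂ)) := by
            intro p
            simp only [hΦdef, hRdef]
            rw [← Complex.exp_add]
            congr 1
            push_cast
            ring
          simp_rw [step1]
          have hpm := integral_prod_mul (μ := γ) (ν := γ)
            (fun w : ℝ => Complex.exp (Complex.I * ((q * Real.cos (y ⬝ᵥ x + ψ) : ℝ) : ℂ) * (w : ℂ)))
            (fun w : ℝ => Complex.exp (Complex.I * ((q * Real.sin (y ⬝ᵥ x - ψ) : ℝ) : ℂ) * (w : ℂ)))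
          rw [hpm, hγdef, gauss_char, gauss_char, ← Complex.ofReal_mul]
          congr 1
          rw [hσ2]
          simp only [hgdef]
          rw [← Real.exp_add, ← Real.exp_add]
          congr 1
          linear_combination (-(σ^2) * q^2/2) * trig (y ⬝ᵥ x)
      _ = ((∫ y, g (y ⬝ᵥ x) ∂ν : ℝ) : ℂ) := integral_ofReal
      _ = ((∫ ω, g (freq ω ⬝ᵥ x) ∂μ : ℝ) : ℂ) := by
          congr 1
          exact integral_map hmeas.aemeasurable ((hgmeas.comp hdot).aestronglyMeasurable)
      _ = (Real.exp (-(1 / 2) * q ^ 2 * σ ^ 2) *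
            ∫ ω, Real.exp ((1 / 2) * q ^ 2 * σ ^ 2
              * Real.sin (2 * ψ) * Real.sin (2 * (freq ω ⬝ᵥ x))) ∂μ : ℝ) := by
          norm_cast
          simp only [hgdef]
          exact integral_const_mul _ _
  refine ⟨key, ?_⟩
  intro hs m v hmap
  set S : Ω → ℝ := fun ω => Real.sin (2 * (freq ω ⬝ᵥ x)) with hSdef
  have hSmeas : Measurable S := Real.measurable_sin.comp (hθmeas.const_mul 2)
  set f : Ω → ℝ := fun ω =>
    wc ω * Real.cos (freq ω ⬝ᵥ x + ψ) + ws ω * Real.sin (freq ω ⬝ᵥ x - ψ) with hfdef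
  have hwc_ae : AEMeasurable wc μ := ⟨wc', hwc'meas, hwc'ae⟩
  have hws_ae : AEMeasurable ws μ := ⟨ws', hws'meas, hws'ae⟩
  have hf_ae : AEMeasurable f μ :=
    (hwc_ae.mul (Real.measurable_cos.comp (hθmeas.add_const ψ)).aemeasurable).add
      (hws_ae.mul (Real.measurable_sin.comp (hθmeas.sub_const ψ)).aemeasurable)
  have charf : ∀ q : ℝ, ∫ ω, Complex.exp (Complex.I * q * ((f ω : ℝ) : ℂ)) ∂μ
      = Complex.exp (((q * m : ℝ) : ℂ) * Complex.I)
        * ((Real.exp (-(v:ℝ) * q ^ 2 / 2) : ℝ) : ℂ) := by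
    intro q
    have hcm : Measurable (fun z : ℝ => Complex.exp (Complex.I * q * (z:ℂ))) :=
      Complex.measurable_exp.comp (measurable_const.mul Complex.measurable_ofReal)
    have h1 : ∫ ω, Complex.exp (Complex.I * q * ((f ω : ℝ):ℂ)) ∂μ
        = ∫ z, Complex.exp (Complex.I * q * (z:ℂ)) ∂(gaussianReal m v) := by
      rw [← hmap]
      exact (integral_map hf_ae hcm.aestronglyMeasurable).symm
    rw [h1]
    have h2 : (gaussianReal m v : Measure ℝ) = Measure.map (fun z => z + m) (gaussianReal 0 v) := by
      rw [gaussianReal_map_add_const, zero_add]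
    rw [h2, integral_map (measurable_add_const m).aemeasurable hcm.aestronglyMeasurable]
    have h3 : ∀ w : ℝ, Complex.exp (Complex.I * q * ((w + m : ℝ):ℂ))
        = Complex.exp (Complex.I * q * (w:ℂ)) * Complex.exp (((q * m : ℝ):ℂ) * Complex.I) := by
      intro w
      rw [← Complex.exp_add]
      congr 1
      push_cast
      ring
    simp_rw [h3]
    rw [integral_mul_const, gauss_char v q]
    ring
  have main_eq : ∀ q : ℝ,
      Complex.exp (((q * m : ℝ) : ℂ) * Complex.I) * ((Real.exp (-(v:ℝ) * q ^ 2 / 2) : ℝ) : ℂ)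
      = ((Real.exp (-(1 / 2) * q ^ 2 * σ ^ 2) *
            ∫ ω, Real.exp ((1 / 2) * q ^ 2 * σ ^ 2
              * Real.sin (2 * ψ) * Real.sin (2 * (freq ω ⬝ᵥ x))) ∂μ : ℝ) : ℂ) := by
    intro q
    refine (charf q).symm.trans (Eq.trans ?_ (key q))
    refine integral_congr_ae (Filter.Eventually.of_forall fun ω => ?_)
    refine congrArg Complex.exp ?_
    simp only [hfdef]
    push_cast
    ring
  have hm : m = 0 := by
    by_contra hm0
    have h := congrArg Complex.im (main_eq (π / (2 * m)))
    have hq : (π / (2 * m)) * m = π / 2 := by field_simp [hm0]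
    simp only [Complex.mul_im, Complex.ofReal_re, Complex.ofReal_im,
      Complex.exp_ofReal_mul_I_re, Complex.exp_ofReal_mul_I_im, mul_zero, zero_mul,
      add_zero, zero_add] at h
    rw [hq, Real.sin_pi_div_two] at h
    simp only [one_mul] at h
    exact (Real.exp_pos _).ne' h
  set c : ℝ := (1/2) * σ ^ 2 * Real.sin (2 * ψ) with hcdef
  have hc : c ≠ 0 := by
    apply mul_ne_zero
    · positivity
    · exact hs
  set a : ℝ := (σ ^ 2 - (v:ℝ)) / 2 with hadef
  have hJ : ∀ q : ℝ, ∫ ω, Real.exp ((q ^ 2 * c) * S ω) ∂μ = Real.exp (q ^ 2 * a) := by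
    intro q
    have h := main_eq q
    rw [hm, mul_zero] at h
    simp only [Complex.ofReal_zero, zero_mul, Complex.exp_zero, one_mul] at h
    have h' : Real.exp (-(v:ℝ) * q ^ 2 / 2)
        = Real.exp (-(1 / 2) * q ^ 2 * σ ^ 2) *
            ∫ ω, Real.exp ((1 / 2) * q ^ 2 * σ ^ 2
              * Real.sin (2 * ψ) * Real.sin (2 * (freq ω ⬝ᵥ x))) ∂μ := by exact_mod_cast h
    have hint_eq : ∫ ω, Real.exp ((q ^ 2 * c) * S ω) ∂μ
        = ∫ ω, Real.exp ((1 / 2) * q ^ 2 * σ ^ 2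
            * Real.sin (2 * ψ) * Real.sin (2 * (freq ω ⬝ᵥ x))) ∂μ := by
      refine integral_congr_ae (Filter.Eventually.of_forall fun ω => ?_)
      refine congrArg Real.exp ?_
      simp only [hSdef, hcdef]
      ring
    rw [hint_eq]
    refine mul_left_cancel₀ (Real.exp_ne_zero (-(1/2) * q ^ 2 * σ ^ 2)) ?_
    rw [← h', ← Real.exp_add]
    refine congrArg Real.exp ?_
    rw [hadef]
    ring
  have hint : ∀ r : ℝ, Integrable (fun ω => Real.exp (r * S ω)) μ := by
    intro r
    refine Integrable.mono' (integrable_const (Real.exp |r|))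
      ((Real.measurable_exp.comp (hSmeas.const_mul r)).aestronglyMeasurable)
      (Filter.Eventually.of_forall fun ω => ?_)
    rw [Real.norm_eq_abs, Real.abs_exp, Real.exp_le_exp]
    have h1 : |S ω| ≤ 1 := by rw [hSdef]; exact Real.abs_sin_le_one _
    calc r * S ω ≤ |r * S ω| := le_abs_self _
      _ = |r| * |S ω| := abs_mul _ _
      _ ≤ |r| * 1 := by nlinarith [abs_nonneg r]
      _ = |r| := mul_one _
  have h1' : ∫ ω, Real.exp (c * S ω) ∂μ = Real.exp a := by
    have := hJ 1
    simpa using this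
  have h2' : ∫ ω, Real.exp ((2 * c) * S ω) ∂μ = Real.exp (2 * a) := by
    have := hJ (Real.sqrt 2)
    rwa [Real.sq_sqrt (by norm_num : (0:ℝ) ≤ 2)] at this
  have hpt : ∀ ω, (Real.exp (c * S ω - a) - 1) ^ 2
      = Real.exp (-(2*a)) * Real.exp ((2*c) * S ω)
        - (2 * Real.exp (-a)) * Real.exp (c * S ω) + 1 := by
    intro ω
    have e2 : Real.exp ((2*c) * S ω) = Real.exp (c * S ω) * Real.exp (c * S ω) := by
      rw [← Real.exp_add]; exact congrArg Real.exp (by ring)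
    have e3 : Real.exp (-(2*a)) = Real.exp (-a) * Real.exp (-a) := by
      rw [← Real.exp_add]; exact congrArg Real.exp (by ring)
    have e4 : Real.exp (c * S ω - a) = Real.exp (c * S ω) * Real.exp (-a) := by
      rw [← Real.exp_add]; exact congrArg Real.exp (by ring)
    rw [e2, e3, e4]
    ring
  have hsq_int : Integrable (fun ω => (Real.exp (c * S ω - a) - 1) ^ 2) μ := by
    have heq : (fun ω => (Real.exp (c * S ω - a) - 1) ^ 2)
        = fun ω => Real.exp (-(2*a)) * Real.exp ((2*c) * S ω)
          - (2 * Real.exp (-a)) * Real.exp (c * S ω) + 1 := funext hpt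
    rw [heq]
    exact (((hint (2*c)).const_mul _).sub ((hint c).const_mul _)).add (integrable_const 1)
  have h0 : ∫ ω, (Real.exp (c * S ω - a) - 1) ^ 2 ∂μ = 0 := by
    simp_rw [hpt]
    have hintA : Integrable (fun ω => Real.exp (-(2*a)) * Real.exp ((2*c) * S ω)) μ :=
      (hint (2*c)).const_mul _
    have hintB : Integrable (fun ω => (2 * Real.exp (-a)) * Real.exp (c * S ω)) μ :=
      (hint c).const_mul _
    have hintAB : Integrable (fun ω => Real.exp (-(2*a)) * Real.exp ((2*c) * S ω)
        - (2 * Real.exp (-a)) * Real.exp (c * S ω)) μ := hintA.sub hintB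
    rw [integral_add hintAB (integrable_const 1), integral_sub hintA hintB,
      integral_const_mul, integral_const_mul, h1', h2', integral_const]
    simp only [measure_univ, ENNReal.toReal_one, smul_eq_mul, mul_one, one_mul]
    rw [← Real.exp_add, mul_assoc, ← Real.exp_add]
    norm_num
  have hae0 := (integral_eq_zero_iff_of_nonneg (fun ω => sq_nonneg _) hsq_int).1 h0
  have hSk : ∀ᵐ ω ∂μ, S ω = a / c := by
    filter_upwards [hae0] with ω hω
    have h1 : Real.exp (c * S ω - a) - 1 = 0 := by
      have := pow_eq_zero_iff (n := 2) (by norm_num) |>.1 hω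
      exact this
    have h2 : c * S ω - a = 0 := by
      rw [← Real.exp_eq_one_iff]
      linarith
    rw [eq_div_iff hc]
    linarith
  have hmapS := hfreq x
  by_cases hv0 : (x ⬝ᵥ Λ.mulVec x).toNNReal = 0
  · rw [hv0, gaussianReal_zero_var] at hmapS
    have hnull : μ ((fun ω => freq ω ⬝ᵥ x) ⁻¹' ({0} : Set ℝ)ᶜ) = 0 := by
      rw [← Measure.map_apply hθmeas (measurableSet_singleton (0:ℝ)).compl, hmapS]
      rw [Measure.dirac_apply' _ (measurableSet_singleton (0:ℝ)).compl]
      simp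
    have hθ0 : ∀ᵐ ω ∂μ, freq ω ⬝ᵥ x = 0 := by
      rw [MeasureTheory.ae_iff]
      convert hnull using 2
      rfl
    filter_upwards [hθ0] with ω hω
    rw [hω]
    simp
  · exfalso
    set A : Set ℝ := (fun y => Real.sin (2 * y)) ⁻¹' {a / c} with hAdef
    have hsinmeas : Measurable (fun y : ℝ => Real.sin (2 * y)) :=
      Real.measurable_sin.comp (measurable_id.const_mul 2)
    have hAmeas : MeasurableSet A := hsinmeas (measurableSet_singleton _)
    have hcompl : (Measure.map (fun ω => freq ω ⬝ᵥ x) μ) Aᶜ = 0 := by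
      rw [Measure.map_apply hθmeas hAmeas.compl]
      have := MeasureTheory.ae_iff.1 hSk
      convert this using 2
      rfl
    rw [hmapS] at hcompl
    have hvol : (volume : Measure ℝ) A = 0 := by
      refine Set.Countable.measure_zero ?_ _
      have : A = {y : ℝ | Real.sin (2 * y) = a / c} := rfl
      rw [this]
      exact countable_sin_eq (a / c)
    have hga : (gaussianReal 0 (x ⬝ᵥ Λ.mulVec x).toNNReal) A = 0 :=
      gaussianReal_absolutelyContinuous 0 hv0 hvol
    have huniv : (gaussianReal 0 (x ⬝ᵥ Λ.mulVec x).toNNReal) Set.univ = 0 := by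
      have hle := measure_union_le (μ := gaussianReal 0 (x ⬝ᵥ Λ.mulVec x).toNNReal) A Aᶜ
      rw [Set.union_compl_self] at hle
      rw [hga, hcompl] at hle
      simpa using hle
    rw [measure_univ] at huniv
    exact one_ne_zero huniv
end

section
/- Let D ≥ 1 and x, y ∈ ℝ^D, and let ω ∈ ℝ^D be a random vector with distribution N(0, I_D). Then E[(cos(ω·x) − cos(ω·y))² + (sin(ω·x) − sin(ω·y))²] = 2 − 2 exp(−½ ‖x − y‖²), i.e., the expected squared distance between the trigonometric feature doublets equals 2 − 2 k_SE(x,y), where k_SE(x,y) = exp(−½ ‖x−y‖²) is the squared exponential kernel with unit hyperparameters. -/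
open MeasureTheory ProbabilityTheory Real Matrix
open scoped ENNReal NNReal

/-- Fubini for a finite product of probability measures on `ℝ`, complex-valued factors. -/
lemma aux_integral_pi_prod : ∀ (n : ℕ) (ν : Fin n → Measure ℝ),
    (∀ i, IsProbabilityMeasure (ν i)) → ∀ (f : Fin n → ℝ → ℂ),
    ∫ x : Fin n → ℝ, ∏ i, f i (x i) ∂(Measure.pi ν) = ∏ i, ∫ x, f i x ∂(ν i) := by
  intro n
  induction n with
  | zero =>
      intro ν hν f
      have : IsProbabilityMeasure (Measure.pi ν) := by infer_instance
      simp
  | succ n ih =>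
      intro ν hν f
      haveI : ∀ i, IsProbabilityMeasure (ν i) := hν
      haveI : ∀ i, SigmaFinite (ν i) := fun i => inferInstance
      calc
        ∫ x : Fin (n+1) → ℝ, ∏ i, f i (x i) ∂(Measure.pi ν)
          = ∫ p : ℝ × (Fin n → ℝ), f 0 p.1 * ∏ i : Fin n, f (Fin.succ i) (p.2 i)
            ∂((ν 0).prod (Measure.pi fun i => ν (Fin.succ i))) := by
          rw [← ((measurePreserving_piFinSuccAbove ν 0).symm).integral_comp']
          simp_rw [MeasurableEquiv.piFinSuccAbove_symm_apply, Fin.insertNthEquiv,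
            Fin.prod_univ_succ, Fin.insertNth_zero, Equiv.coe_fn_mk, Fin.cons_succ,
            Fin.zero_succAbove, cast_eq, Fin.cons_zero]
        _ = (∫ x, f 0 x ∂(ν 0)) * ∏ i : Fin n, ∫ x, f (Fin.succ i) x ∂(ν (Fin.succ i)) := by
          rw [integral_prod_mul (f := fun a : ℝ => f 0 a)
            (g := fun q : Fin n → ℝ => ∏ i : Fin n, f (Fin.succ i) (q i)),
            ih _ (fun i => hν _)]
        _ = ∏ i, ∫ x, f i x ∂(ν i) := by rw [Fin.prod_univ_succ]

/-- Characteristic function of the standard Gaussian. -/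
lemma aux_gauss_cexp (t : ℝ) :
    ∫ u : ℝ, Complex.exp (Complex.I * t * u) ∂(gaussianReal 0 1)
      = Complex.exp (-(t : ℂ) ^ 2 / 2) := by
  rw [gaussianReal_of_var_ne_zero 0 one_ne_zero]
  have hd : gaussianPDF 0 1
      = fun u => ((Real.toNNReal (gaussianPDFReal 0 1 u) : ℝ≥0) : ℝ≥0∞) := rfl
  rw [hd, integral_withDensity_eq_integral_smul
    ((measurable_gaussianPDFReal 0 1).real_toNNReal)]
  have hpdf : ∀ u : ℝ, ((Real.toNNReal (gaussianPDFReal 0 1 u) : ℝ≥0) : ℝ)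
      = (Real.sqrt (2 * π))⁻¹ * Real.exp (-u ^ 2 / 2) := by
    intro u
    rw [Real.coe_toNNReal _ (gaussianPDFReal_nonneg 0 1 u)]
    simp [gaussianPDFReal]
  have hstep : ∀ u : ℝ,
      ((Real.toNNReal (gaussianPDFReal 0 1 u) : ℝ≥0) • Complex.exp (Complex.I * t * u))
      = ((Real.sqrt (2 * π))⁻¹ : ℂ) *
          (Complex.exp (Complex.I * t * u) * Complex.exp (-(1/2 : ℂ) * (u : ℂ) ^ 2)) := by
    intro u
    rw [NNReal.smul_def, Complex.real_smul, hpdf u]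
    push_cast
    rw [show (-(1/2 : ℂ)) * (u : ℂ) ^ 2 = -(u : ℂ) ^ 2 / 2 by ring]
    ring
  simp_rw [hstep]
  rw [integral_const_mul]
  rw [fourierIntegral_gaussian (by norm_num : (0:ℝ) < (1/2 : ℂ).re) (t : ℂ)]
  have h2π : (0:ℝ) ≤ 2 * π := by positivity
  have hsq : ((π : ℂ) / (1/2 : ℂ)) ^ (1/2 : ℂ) = ((Real.sqrt (2 * π) : ℝ) : ℂ) := by
    have : ((π : ℂ) / (1/2 : ℂ)) = ((2 * π : ℝ) : ℂ) := by push_cast; ring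
    rw [this, Real.sqrt_eq_rpow]
    rw [show (1/2 : ℂ) = ((1/2 : ℝ) : ℂ) by norm_num]
    rw [← Complex.ofReal_cpow h2π]
  rw [hsq]
  have hne : ((Real.sqrt (2 * π) : ℝ) : ℂ) ≠ 0 := by
    simp only [ne_eq, Complex.ofReal_eq_zero]
    positivity
  rw [← mul_assoc, inv_mul_cancel₀ hne, one_mul]
  norm_num

lemma aux_cos_dot (D : ℕ) (v : Fin D → ℝ) :
    ∫ w : Fin D → ℝ, Real.cos (w ⬝ᵥ v) ∂(Measure.pi fun _ : Fin D => gaussianReal 0 1)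
      = Real.exp (-(1/2) * ∑ j, (v j) ^ 2) := by
  have hcontd : Continuous fun w : Fin D → ℝ => w ⬝ᵥ v := by
    exact continuous_finset_sum _ fun j _ => (continuous_apply j).mul continuous_const
  have hcont : Continuous fun w : Fin D → ℝ =>
      Complex.exp (Complex.I * ((w ⬝ᵥ v : ℝ) : ℂ)) := by
    exact Complex.continuous_exp.comp (continuous_const.mul (Complex.continuous_ofReal.comp hcontd))
  have hInt : Integrable (fun w : Fin D → ℝ => Complex.exp (Complex.I * ((w ⬝ᵥ v : ℝ) : ℂ)))
      (Measure.pi fun _ : Fin D => gaussianReal 0 1) := by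
    refine (integrable_const (1:ℝ)).mono' hcont.aestronglyMeasurable ?_
    filter_upwards with w
    rw [Complex.norm_exp]
    simp [mul_comm]
  have hC : ∫ w : Fin D → ℝ, Complex.exp (Complex.I * ((w ⬝ᵥ v : ℝ) : ℂ))
        ∂(Measure.pi fun _ : Fin D => gaussianReal 0 1)
      = Complex.exp (-((∑ j, (v j) ^ 2 : ℝ) : ℂ) / 2) := by
    have hfac : ∀ w : Fin D → ℝ, Complex.exp (Complex.I * ((w ⬝ᵥ v : ℝ) : ℂ))
        = ∏ j, Complex.exp (Complex.I * (v j : ℂ) * (w j : ℂ)) := by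
      intro w
      rw [← Complex.exp_sum]
      congr 1
      simp only [dotProduct, Complex.ofReal_sum, Complex.ofReal_mul, Finset.mul_sum]
      exact Finset.sum_congr rfl fun j _ => by ring
    simp_rw [hfac]
    rw [aux_integral_pi_prod D (fun _ => gaussianReal 0 1) (fun _ => inferInstance)
      (fun j u => Complex.exp (Complex.I * (v j : ℂ) * (u : ℂ)))]
    simp_rw [aux_gauss_cexp]
    rw [← Complex.exp_sum]
    congr 1
    push_cast
    rw [neg_div, Finset.sum_div, ← Finset.sum_neg_distrib]
    exact Finset.sum_congr rfl fun j _ => by ring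
  have hcos : ∀ w : Fin D → ℝ, Real.cos (w ⬝ᵥ v)
      = RCLike.re (Complex.exp (Complex.I * ((w ⬝ᵥ v : ℝ) : ℂ))) := by
    intro w
    rw [mul_comm]
    exact (Complex.exp_ofReal_mul_I_re _).symm
  simp_rw [hcos]
  rw [integral_re hInt, hC]
  have : (-((∑ j, (v j) ^ 2 : ℝ) : ℂ) / 2) = ((-(1/2) * ∑ j, (v j) ^ 2 : ℝ) : ℂ) := by
    push_cast; ring
  rw [this, ← Complex.ofReal_exp]
  exact Complex.ofReal_re _

/-- For `ω ~ N(0, I_D)` (i.i.d. standard Gaussian entries) and `x, y ∈ ℝ^D`,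
`E[(cos(ω·x) − cos(ω·y))² + (sin(ω·x) − sin(ω·y))²] = 2 − 2 exp(−½ ‖x−y‖²)`. -/
theorem stmt11 {Ω : Type*} [MeasurableSpace Ω] (μ : Measure Ω) [IsProbabilityMeasure μ]
    (D : ℕ) (hD : 1 ≤ D) (x y : Fin D → ℝ)
    (W : Ω → Fin D → ℝ)
    (hW : Measure.map W μ = Measure.pi (fun _ : Fin D => gaussianReal 0 1)) :
    ∫ ω, ((Real.cos (W ω ⬝ᵥ x) - Real.cos (W ω ⬝ᵥ y)) ^ 2
        + (Real.sin (W ω ⬝ᵥ x) - Real.sin (W ω ⬝ᵥ y)) ^ 2) ∂μ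
      = 2 - 2 * Real.exp (-(1 / 2) * ∑ j, (x j - y j) ^ 2) := by
  have hWm : AEMeasurable W μ := by
    by_contra h
    rw [Measure.map_of_not_aemeasurable h] at hW
    exact (IsProbabilityMeasure.ne_zero (Measure.pi fun _ : Fin D => gaussianReal 0 1)) hW.symm
  set v : Fin D → ℝ := x - y with hv
  have hpt : ∀ ω, (Real.cos (W ω ⬝ᵥ x) - Real.cos (W ω ⬝ᵥ y)) ^ 2
      + (Real.sin (W ω ⬝ᵥ x) - Real.sin (W ω ⬝ᵥ y)) ^ 2
      = 2 - 2 * Real.cos (W ω ⬝ᵥ v) := by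
    intro ω
    have hdot : W ω ⬝ᵥ v = W ω ⬝ᵥ x - W ω ⬝ᵥ y := by
      rw [hv, dotProduct_sub]
    rw [hdot]
    set a := W ω ⬝ᵥ x
    set b := W ω ⬝ᵥ y
    have h1 := Real.sin_sq_add_cos_sq a
    have h2 := Real.sin_sq_add_cos_sq b
    have h3 := Real.cos_sub a b
    nlinarith [h1, h2, h3]
  simp_rw [hpt]
  have hcontd : Continuous fun w : Fin D → ℝ => Real.cos (w ⬝ᵥ v) :=
    Real.continuous_cos.comp
      (continuous_finset_sum _ fun j _ => (continuous_apply j).mul continuous_const)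
  have hIntc : Integrable (fun ω => Real.cos (W ω ⬝ᵥ v)) μ := by
    refine (integrable_const (1:ℝ)).mono'
      (hcontd.aestronglyMeasurable.comp_aemeasurable hWm) ?_
    filter_upwards with ω
    simpa using Real.abs_cos_le_one _
  rw [integral_sub (integrable_const 2) (hIntc.const_mul 2), integral_const,
    integral_const_mul]
  have hmap : ∫ ω, Real.cos (W ω ⬝ᵥ v) ∂μ
      = ∫ w : Fin D → ℝ, Real.cos (w ⬝ᵥ v) ∂(Measure.pi fun _ : Fin D => gaussianReal 0 1) := by
    rw [← hW, integral_map hWm (by rw [hW]; exact hcontd.aestronglyMeasurable)]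
  rw [hmap, aux_cos_dot]
  have : ∑ j, (v j) ^ 2 = ∑ j, (x j - y j) ^ 2 := by
    exact Finset.sum_congr rfl fun j _ => by simp [hv]
  rw [this]
  simp
end

section
/- Let ω and Z be independent real Gaussian random variables where ω has the finite mixture distribution Σ_a π_a N(μ_a, σ_a²) (π_a ≥ 0 summing to 1) and Z ~ N(m, δ²). Then E[cos(ω Z)] = Σ_a π_a (1 + σ_a² δ²)^{−1/2} · exp(−(σ_a² m² + δ² μ_a²) / (2(1 + σ_a² δ²))) · cos(μ_a m / (1 + σ_a² δ²)). -/
open MeasureTheory ProbabilityTheory Real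
open scoped ENNReal NNReal

private lemma calc1 (Vc tc m0c xc cc : ℂ) (hV : Vc ≠ 0) :
    -((xc - m0c)^2) / (2*Vc) + (-(tc/2)*xc^2 + cc*xc)
      = (-((1+tc*Vc)/(2*Vc)))*xc^2 + (cc + m0c/Vc)*xc + (-m0c^2/(2*Vc)) := by
  field_simp
  ring

private lemma calc2 (Vc tc m0c cc : ℂ) (hV : Vc ≠ 0) (hK : 1 + tc*Vc ≠ 0) :
    (-m0c^2/(2*Vc)) - (cc + m0c/Vc)^2 / (4 * (-((1+tc*Vc)/(2*Vc))))
      = (-(tc/2)*m0c^2 + cc*m0c + Vc*cc^2/2)/(1+tc*Vc) := by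
  have hden : (4 * (-((1+tc*Vc)/(2*Vc)))) ≠ 0 := by
    intro h
    rcases mul_eq_zero.mp h with h' | h'
    · norm_num at h'
    · rw [neg_eq_zero, div_eq_zero_iff] at h'
      rcases h' with h'' | h''
      · exact hK h''
      · simp [hV] at h''
  rw [div_sub_div _ _ (by simp [hV] : (2*Vc) ≠ 0) hden,
    div_eq_div_iff (mul_ne_zero (by simp [hV]) hden) hK]
  field_simp
  ring

lemma gauss_cexp_int (m0 : ℝ) (v : ℝ≥0) (t : ℝ) (ht : 0 ≤ t) (c : ℂ) :
    ∫ x : ℝ, Complex.exp (-(t/2 : ℂ) * x^2 + c * x) ∂(gaussianReal m0 v)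
      = ((1 + t * (v:ℝ)) ^ (-(1/2) : ℝ) : ℝ) *
        Complex.exp ((-(t/2 : ℂ) * m0^2 + c * m0 + (v:ℝ) * c^2 / 2) / (1 + t * (v:ℝ))) := by
  rcases eq_or_ne v 0 with hv | hv
  · subst hv
    simp [gaussianReal_zero_var, integral_dirac]
  · have hV : 0 < (v:ℝ) := by positivity
    have hK : 0 < 1 + t * (v:ℝ) := by positivity
    set B : ℂ := ((-((1 + t*(v:ℝ))/(2*(v:ℝ))) : ℝ) : ℂ) with hBdef
    set C : ℂ := c + ((m0/(v:ℝ) : ℝ) : ℂ) with hCdef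
    set D : ℂ := ((-(m0^2)/(2*(v:ℝ)) : ℝ) : ℂ) with hDdef
    have hB : B.re < 0 := by
      rw [hBdef, Complex.ofReal_re]
      have : 0 < (1 + t*(v:ℝ))/(2*(v:ℝ)) := by positivity
      linarith
    have hVC : (((v:ℝ)) : ℂ) ≠ 0 := by exact_mod_cast hV.ne'
    have hKC : 1 + (t:ℂ) * ((v:ℝ):ℂ) ≠ 0 := by
      exact_mod_cast (show ((1 + t*(v:ℝ) : ℝ) : ℂ) ≠ 0 by exact_mod_cast hK.ne')
    rw [gaussianReal_of_var_ne_zero _ hv]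
    have hpdf : gaussianPDF m0 v = fun x =>
        ((Real.toNNReal (gaussianPDFReal m0 v x) : ℝ≥0) : ℝ≥0∞) := by
      funext x; rfl
    rw [hpdf, integral_withDensity_eq_integral_smul
      ((measurable_gaussianPDFReal m0 v).real_toNNReal)]
    have h1 : ∀ x : ℝ, (Real.toNNReal (gaussianPDFReal m0 v x)) •
          Complex.exp (-(t/2 : ℂ) * x^2 + c * x)
        = (((Real.sqrt (2 * π * (v:ℝ)))⁻¹ : ℝ) : ℂ) * Complex.exp (B * x^2 + C * x + D) := by
      intro x
      rw [NNReal.smul_def, Real.coe_toNNReal _ (gaussianPDFReal_nonneg m0 v x)]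
      rw [gaussianPDFReal, Complex.real_smul]
      push_cast
      rw [mul_assoc, ← Complex.exp_add]
      congr 1
      rw [hBdef, hCdef, hDdef]
      push_cast
      exact congrArg Complex.exp (calc1 _ _ _ _ _ hVC)
    simp_rw [h1]
    rw [MeasureTheory.integral_const_mul, integral_cexp_quadratic hB C D]
    have hb2 : ((π : ℂ) / -B) = (((2 * π * (v:ℝ)) / (1 + t * (v:ℝ)) : ℝ) : ℂ) := by
      rw [hBdef]
      have h5 : π / ((1+t*(v:ℝ))/(2*(v:ℝ))) = 2*π*(v:ℝ)/(1+t*(v:ℝ)) := by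
        rw [div_div_eq_mul_div]
        congr 1
        ring
      rw [← h5]
      push_cast
      ring
    have hprefact : (((Real.sqrt (2 * π * (v:ℝ)))⁻¹ : ℝ) : ℂ) * ((π : ℂ) / -B) ^ (1/2 : ℂ)
        = (((1 + t * (v:ℝ)) ^ (-(1/2) : ℝ) : ℝ) : ℂ) := by
      have h2V : (0:ℝ) < 2 * π * (v:ℝ) := by positivity
      rw [hb2, show ((1:ℂ)/2) = (((1/2 : ℝ) : ℝ) : ℂ) by norm_num,
        ← Complex.ofReal_cpow (by positivity), ← Complex.ofReal_mul]
      norm_cast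
      rw [Real.div_rpow h2V.le hK.le, Real.sqrt_eq_rpow, Real.rpow_neg hK.le]
      have h3 : (2 * π * (v:ℝ)) ^ ((1:ℝ)/2) ≠ 0 := by positivity
      field_simp
    have hexp : D - C^2/(4 * B)
        = (-(t/2 : ℂ) * m0^2 + c * m0 + ((v:ℝ):ℂ) * c^2 / 2) / (1 + t * (v:ℝ)) := by
      have hc2 := calc2 ((v:ℝ):ℂ) (t:ℂ) (m0:ℂ) c hVC hKC
      rw [hBdef, hCdef, hDdef]
      push_cast
      push_cast at hc2
      linear_combination hc2
    rw [← mul_assoc, hprefact, hexp]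

private lemma prod_cos (ν ρ : Measure ℝ) [IsProbabilityMeasure ν] [IsProbabilityMeasure ρ] :
    ∫ p : ℝ × ℝ, Real.cos (p.1 * p.2) ∂(ν.prod ρ)
      = (∫ x : ℝ, (∫ y : ℝ, Complex.exp ((x * y : ℝ) * Complex.I) ∂ρ) ∂ν).re := by
  have hFc : Continuous fun p : ℝ × ℝ => Complex.exp ((p.1 * p.2 : ℝ) * Complex.I) :=
    Complex.continuous_exp.comp
      ((Complex.continuous_ofReal.comp (continuous_fst.mul continuous_snd)).mul continuous_const)
  have hFint : Integrable (fun p : ℝ × ℝ => Complex.exp ((p.1 * p.2 : ℝ) * Complex.I))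
      (ν.prod ρ) := by
    refine Integrable.mono' (integrable_const 1) hFc.aestronglyMeasurable ?_
    filter_upwards with p
    rw [Complex.norm_exp]
    simp
  rw [← integral_prod _ hFint]
  have := Complex.reCLM.integral_comp_comm hFint
  simp only [Complex.reCLM_apply] at this
  rw [← this]
  refine integral_congr_ae (Filter.Eventually.of_forall fun p => ?_)
  simpa using (Complex.exp_ofReal_mul_I_re (p.1 * p.2)).symm

private lemma inner_int (m δ x : ℝ) :
    ∫ y : ℝ, Complex.exp ((x * y : ℝ) * Complex.I) ∂(gaussianReal m (Real.toNNReal (δ^2)))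
      = Complex.exp (-((δ^2 : ℝ)/2 : ℂ) * x^2 + ((m:ℂ) * Complex.I) * x) := by
  have hw : ((Real.toNNReal (δ ^ 2) : ℝ≥0) : ℝ) = δ ^ 2 := Real.coe_toNNReal _ (sq_nonneg δ)
  have h0 : (fun y : ℝ => Complex.exp ((x * y : ℝ) * Complex.I))
      = fun y : ℝ => Complex.exp (-((0:ℝ)/2 : ℂ) * y^2 + ((x:ℂ) * Complex.I) * y) := by
    funext y
    congr 1
    push_cast
    ring
  rw [h0, gauss_cexp_int m (Real.toNNReal (δ^2)) 0 le_rfl ((x:ℂ) * Complex.I), hw]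
  norm_num
  congr 1
  rw [mul_pow, Complex.I_sq]
  ring

private lemma outer_int (m δ μ0 s0 : ℝ) :
    (∫ x : ℝ, Complex.exp (-((δ^2 : ℝ)/2 : ℂ) * x^2 + ((m:ℂ) * Complex.I) * x)
        ∂(gaussianReal μ0 (Real.toNNReal (s0^2)))).re
      = (1 + s0^2 * δ^2) ^ (-(1/2) : ℝ)
        * Real.exp (-(s0^2 * m^2 + δ^2 * μ0^2) / (2 * (1 + s0^2 * δ^2)))
        * Real.cos (μ0 * m / (1 + s0^2 * δ^2)) := by
  have hsa : ((Real.toNNReal (s0 ^ 2) : ℝ≥0) : ℝ) = s0 ^ 2 := Real.coe_toNNReal _ (sq_nonneg s0)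
  rw [gauss_cexp_int μ0 (Real.toNNReal (s0^2)) (δ^2) (sq_nonneg δ) ((m:ℂ) * Complex.I), hsa]
  have hKpos : (0:ℝ) < 1 + s0^2 * δ^2 := by positivity
  have hKC : ((1 + s0^2 * δ^2 : ℝ) : ℂ) ≠ 0 := by exact_mod_cast hKpos.ne'
  have hreim : ∀ A B : ℝ, (((A:ℂ) + (B:ℂ) * Complex.I).re = A ∧
      ((A:ℂ) + (B:ℂ) * Complex.I).im = B) := by
    intro A B
    constructor <;>
      simp [Complex.add_re, Complex.add_im, Complex.ofReal_re, Complex.ofReal_im,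
        Complex.mul_re, Complex.mul_im, Complex.I_re, Complex.I_im]
  have hden : (1 + ((δ^2:ℝ):ℂ) * ((s0^2:ℝ):ℂ)) = ((1 + δ^2 * s0^2 : ℝ) : ℂ) := by
    push_cast; ring
  have hnum : (-((δ^2 : ℝ)/2 : ℂ) * (μ0:ℂ)^2 + ((m:ℂ) * Complex.I) * (μ0:ℂ)
        + ((s0^2 : ℝ) : ℂ) * ((m:ℂ) * Complex.I)^2 / 2)
      = ((-(δ^2 * μ0^2 + s0^2 * m^2)/2 : ℝ) : ℂ) + ((m * μ0 : ℝ) : ℂ) * Complex.I := by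
    rw [mul_pow, Complex.I_sq]
    push_cast
    ring
  have hK2 : (1 + δ^2 * s0^2 : ℝ) = 1 + s0^2 * δ^2 := by ring
  have hE : (-((δ^2 : ℝ)/2 : ℂ) * (μ0:ℂ)^2 + ((m:ℂ) * Complex.I) * (μ0:ℂ)
        + ((s0^2 : ℝ) : ℂ) * ((m:ℂ) * Complex.I)^2 / 2) / (1 + ((δ^2 : ℝ):ℂ) * ((s0^2 : ℝ):ℂ))
      = ((-(s0^2 * m^2 + δ^2 * μ0^2) / (2 * (1 + s0^2 * δ^2)) : ℝ) : ℂ)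
        + ((μ0 * m / (1 + s0^2 * δ^2) : ℝ) : ℂ) * Complex.I := by
    have e1 : (-(δ^2 * μ0^2 + s0^2 * m^2)/2) / (1 + δ^2 * s0^2)
        = -(s0^2 * m^2 + δ^2 * μ0^2) / (2 * (1 + s0^2 * δ^2)) := by
      rw [div_div, hK2]
      congr 1
      ring
    have e2 : (m * μ0) / (1 + δ^2 * s0^2) = μ0 * m / (1 + s0^2 * δ^2) := by
      rw [hK2]
      ring
    rw [hnum, hden, add_div, mul_div_right_comm, ← Complex.ofReal_div, ← Complex.ofReal_div,
      e1, e2]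
  rw [hE, Complex.re_ofReal_mul, Complex.exp_re,
    (hreim _ _).1, (hreim _ _).2]
  ring

/-- For independent real random variables `ω` with Gaussian mixture distribution
`Σ_a π_a N(μ_a, σ_a²)` and `Z ~ N(m, δ²)`,
`E[cos(ω Z)] = Σ_a π_a (1+σ_a²δ²)^{−1/2} exp(−(σ_a² m² + δ² μ_a²)/(2(1+σ_a²δ²)))
cos(μ_a m/(1+σ_a²δ²))`. -/
theorem stmt16 {Ω : Type*} [MeasurableSpace Ω] (μ : Measure Ω) [IsProbabilityMeasure μ]
    {α : Type*} [Fintype α] (π' : α → ℝ≥0) (hπ : ∑ a, π' a = 1)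
    (μm s : α → ℝ) (m δ : ℝ)
    (W Z : Ω → ℝ)
    (hW : Measure.map W μ
      = ∑ a, (π' a : ℝ≥0∞) • gaussianReal (μm a) (Real.toNNReal (s a ^ 2)))
    (hZ : Measure.map Z μ = gaussianReal m (Real.toNNReal (δ ^ 2)))
    (hindep : IndepFun W Z μ) :
    ∫ ω, Real.cos (W ω * Z ω) ∂μ
      = ∑ a, (π' a : ℝ) * (1 + s a ^ 2 * δ ^ 2) ^ (-(1 / 2) : ℝ)
          * Real.exp (-(s a ^ 2 * m ^ 2 + δ ^ 2 * μm a ^ 2) / (2 * (1 + s a ^ 2 * δ ^ 2)))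
          * Real.cos (μm a * m / (1 + s a ^ 2 * δ ^ 2)) := by
  have hνuniv : (∑ a, (π' a : ℝ≥0∞) • gaussianReal (μm a) (Real.toNNReal (s a ^ 2)) : Measure ℝ)
      Set.univ = 1 := by
    rw [Measure.finset_sum_apply]
    simp only [Measure.smul_apply, measure_univ, smul_eq_mul, mul_one]
    rw [← ENNReal.coe_finset_sum, hπ, ENNReal.coe_one]
  haveI hνP : IsProbabilityMeasure
      (∑ a, (π' a : ℝ≥0∞) • gaussianReal (μm a) (Real.toNNReal (s a ^ 2)) : Measure ℝ) :=
    ⟨hνuniv⟩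
  have hWae : AEMeasurable W μ := by
    by_contra h
    rw [Measure.map_of_not_aemeasurable h] at hW
    have h0 : (0 : Measure ℝ) Set.univ = 1 := by rw [hW]; exact hνuniv
    simp at h0
  have hZae : AEMeasurable Z μ := by
    by_contra h
    rw [Measure.map_of_not_aemeasurable h] at hZ
    have h0 : (0 : Measure ℝ) Set.univ = 1 := by rw [hZ]; exact measure_univ
    simp at h0
  have hmap := (indepFun_iff_map_prod_eq_prod_map_map hWae hZae).mp hindep
  have hcont : Continuous fun p : ℝ × ℝ => Real.cos (p.1 * p.2) :=
    Real.continuous_cos.comp (continuous_fst.mul continuous_snd)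
  have hint1 : ∫ ω, Real.cos (W ω * Z ω) ∂μ
      = ∫ p : ℝ × ℝ, Real.cos (p.1 * p.2)
          ∂((∑ a, (π' a : ℝ≥0∞) • gaussianReal (μm a) (Real.toNNReal (s a ^ 2)) : Measure ℝ).prod
            (gaussianReal m (Real.toNNReal (δ ^ 2)))) := by
    rw [← hW, ← hZ, ← hmap]
    exact (integral_map (hWae.prodMk hZae) hcont.aestronglyMeasurable).symm
  rw [hint1, prod_cos]
  rw [integral_congr_ae (Filter.Eventually.of_forall fun x => inner_int m δ x)]
  have hgmeas : Continuous fun x : ℝ =>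
      Complex.exp (-((δ^2 : ℝ)/2 : ℂ) * x^2 + ((m:ℂ) * Complex.I) * x) := by
    apply Complex.continuous_exp.comp
    apply Continuous.add
    · exact (continuous_const.mul ((Complex.continuous_ofReal.pow 2)))
    · exact continuous_const.mul Complex.continuous_ofReal
  have hgnorm : ∀ x : ℝ,
      ‖Complex.exp (-((δ^2 : ℝ)/2 : ℂ) * x^2 + ((m:ℂ) * Complex.I) * x)‖ ≤ 1 := by
    intro x
    rw [Complex.norm_exp]
    have hre2 : ((-((δ^2 : ℝ)/2 : ℂ)) * (x:ℂ)^2 + ((m:ℂ) * Complex.I) * (x:ℂ)).re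
        = -(δ^2/2) * x^2 := by
      simp [← Complex.ofReal_pow]
    rw [hre2]
    exact Real.exp_le_one_iff.mpr (by nlinarith [sq_nonneg (δ*x)])
  have hgint : ∀ a : α, Integrable
      (fun x : ℝ => Complex.exp (-((δ^2 : ℝ)/2 : ℂ) * x^2 + ((m:ℂ) * Complex.I) * x))
      (gaussianReal (μm a) (Real.toNNReal (s a ^ 2))) := by
    intro a
    refine Integrable.mono' (integrable_const 1) hgmeas.aestronglyMeasurable ?_
    filter_upwards with x
    exact hgnorm x
  rw [integral_finset_sum_measure (fun a _ => (hgint a).smul_measure ENNReal.coe_ne_top),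
    Complex.re_sum]
  refine Finset.sum_congr rfl fun a _ => ?_
  rw [integral_smul_measure, ENNReal.coe_toReal, Complex.real_smul, Complex.re_ofReal_mul,
    outer_int m δ (μm a) (s a)]
  ring
end

section
/- Let k ∈ [−1, 1] and let (X, Y) be a jointly Gaussian pair with mean zero, Var(X) = Var(Y) = 1, and Cov(X, Y) = k. Define k_DGP = (1 + 2(1 − k))^{−1/2}. Then E[exp(−½ (X − Y)²)] + k · E[(1 − (X − Y)²) exp(−½ (X − Y)²)] = k_DGP + k · k_DGP³. In particular, with k = k_SE(x,y) = exp(−½‖x−y‖²), the neural tangent kernel of the two-layer deep trigonometric network with bottleneck width H = 1, whose weight layers are trained by gradient descent on a squared loss with fixed features, equals k_NTK(x,y) = k_DGP(x,y) + k_SE(x,y) · k_DGP(x,y)³ with all hyperparameters set to one. -/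
open MeasureTheory ProbabilityTheory Real

lemma gauss_sq_int {c : ℝ} (hc : 0 < c) :
    ∫ x : ℝ, x ^ 2 * Real.exp (-c * x ^ 2) = (2 * c)⁻¹ * Real.sqrt (π / c) := by
  have hint2 : Integrable fun x : ℝ => x ^ 2 * Real.exp (-c * x ^ 2) := by
    have := integrable_rpow_mul_exp_neg_mul_sq hc (s := 2) (by norm_num)
    simpa [Real.rpow_natCast] using
      (by simpa using integrable_rpow_mul_exp_neg_mul_sq hc (s := (2:ℝ)) (by norm_num) :
        Integrable fun x : ℝ => x ^ (2:ℝ) * Real.exp (-c * x ^ 2))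
  have hint1 : Integrable fun x : ℝ => Real.exp (-c * x ^ 2) := integrable_exp_neg_mul_sq hc
  have hder : ∀ x : ℝ, HasDerivAt (fun x : ℝ => x * Real.exp (-c * x ^ 2))
      (Real.exp (-c * x ^ 2) - 2 * c * (x ^ 2 * Real.exp (-c * x ^ 2))) x := by
    intro x
    have h1 : HasDerivAt (fun x : ℝ => Real.exp (-c * x ^ 2))
        (Real.exp (-c * x ^ 2) * (-c * (2 * x))) x := by
      have := ((hasDerivAt_pow 2 x).const_mul (-c)).exp
      simpa using this
    have : HasDerivAt (fun x : ℝ => x * Real.exp (-c * x ^ 2))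
        (1 * Real.exp (-c * x ^ 2) + x * (Real.exp (-c * x ^ 2) * (-c * (2 * x)))) x :=
      (hasDerivAt_id x).mul h1
    convert this using 1
    ring
  have hzero := integral_eq_zero_of_hasDerivAt_of_integrable hder
    (hint1.sub (hint2.const_mul (2 * c))) (by simpa using integrable_mul_exp_neg_mul_sq hc)
  rw [integral_sub hint1 (hint2.const_mul (2*c)), integral_const_mul, integral_gaussian] at hzero
  have h2c : (2*c) ≠ 0 := by positivity
  field_simp at hzero ⊢
  linarith

lemma int_gaussianReal {v : NNReal} (hv : v ≠ 0) (g : ℝ → ℝ) :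
    ∫ x, g x ∂(gaussianReal 0 v) = ∫ x, gaussianPDFReal 0 v x * g x := by
  rw [gaussianReal_of_var_ne_zero 0 hv]
  have h : gaussianPDF 0 v
      = fun x => ((Real.toNNReal (gaussianPDFReal 0 v x) : NNReal) : ENNReal) := by
    ext x; rfl
  rw [h, integral_withDensity_eq_integral_smul
    ((measurable_gaussianPDFReal 0 v).real_toNNReal)]
  congr 1
  ext x
  simp [NNReal.smul_def, Real.coe_toNNReal _ (gaussianPDFReal_nonneg 0 v x)]

lemma L1 {v : NNReal} (hv : v ≠ 0) :
    ∫ x, Real.exp (-(1/2) * x ^ 2) ∂(gaussianReal 0 v)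
      = Real.sqrt ((1 + (v:ℝ))⁻¹) := by
  have hV : 0 < (v:ℝ) := by exact_mod_cast hv.bot_lt
  set V := (v:ℝ) with hVdef
  have hc : 0 < (1+V)/(2*V) := by positivity
  rw [int_gaussianReal hv]
  have heq : ∀ x:ℝ, gaussianPDFReal 0 v x * Real.exp (-(1/2)*x^2)
      = (Real.sqrt (2*π*V))⁻¹ * Real.exp (-((1+V)/(2*V)) * x^2) := by
    intro x
    rw [gaussianPDFReal, mul_assoc, ← Real.exp_add]
    congr 2
    field_simp
    ring
  simp_rw [heq]
  rw [integral_const_mul, integral_gaussian]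
  have hπ : π / ((1+V)/(2*V)) = (2*π*V) * (1+V)⁻¹ := by field_simp
  rw [hπ, Real.sqrt_mul (by positivity : (0:ℝ) ≤ 2*π*V) (1+V)⁻¹,
    inv_mul_cancel_left₀ (Real.sqrt_pos.mpr (by positivity : (0:ℝ) < 2*π*V)).ne']

lemma L2 {v : NNReal} (hv : v ≠ 0) :
    ∫ x, x ^ 2 * Real.exp (-(1/2) * x ^ 2) ∂(gaussianReal 0 v)
      = (v:ℝ) * (1 + (v:ℝ))⁻¹ * Real.sqrt ((1 + (v:ℝ))⁻¹) := by
  have hV : 0 < (v:ℝ) := by exact_mod_cast hv.bot_lt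
  set V := (v:ℝ) with hVdef
  have hc : 0 < (1+V)/(2*V) := by positivity
  rw [int_gaussianReal hv]
  have heq : ∀ x:ℝ, gaussianPDFReal 0 v x * (x^2 * Real.exp (-(1/2)*x^2))
      = (Real.sqrt (2*π*V))⁻¹ * (x^2 * Real.exp (-((1+V)/(2*V)) * x^2)) := by
    intro x
    have h : Real.exp (-(x-0)^2/(2*V)) * Real.exp (-(1/2)*x^2)
        = Real.exp (-((1+V)/(2*V))*x^2) := by
      rw [← Real.exp_add]; congr 1; field_simp; ring
    rw [gaussianPDFReal]
    linear_combination (Real.sqrt (2*π*V))⁻¹ * x^2 * h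
  simp_rw [heq]
  rw [integral_const_mul, gauss_sq_int hc]
  have hπ : π / ((1+V)/(2*V)) = (2*π*V) * (1+V)⁻¹ := by field_simp
  have hA : Real.sqrt (2*π*V) ≠ 0 := (Real.sqrt_pos.mpr (by positivity)).ne'
  have h2 : (2*((1+V)/(2*V)))⁻¹ = V*(1+V)⁻¹ := by
    rw [mul_div_assoc']
    field_simp
  rw [hπ, Real.sqrt_mul (by positivity : (0:ℝ) ≤ 2*π*V) (1+V)⁻¹, h2]
  field_simp


/-- NTK of the two-layer deep trigonometric network (bottleneck width `H = 1`): for a centered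
jointly Gaussian pair `(X, Y)` with unit variances and correlation `k ∈ [−1,1]` (joint
Gaussianity encoded by the linear-functional characterization), with
`k_DGP = (1 + 2(1 − k))^{−1/2}`,
`E[exp(−½(X−Y)²)] + k E[(1−(X−Y)²) exp(−½(X−Y)²)] = k_DGP + k k_DGP³`. -/
theorem stmt19 {Ω : Type*} [MeasurableSpace Ω] (μ : Measure Ω) [IsProbabilityMeasure μ]
    (k : ℝ) (hk : k ∈ Set.Icc (-1 : ℝ) 1)
    (X Y : Ω → ℝ)
    (hgauss : ∀ a b : ℝ,
      Measure.map (fun ω => a * X ω + b * Y ω) μ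
        = gaussianReal 0 (Real.toNNReal (a ^ 2 + b ^ 2 + 2 * a * b * k))) :
    (∫ ω, Real.exp (-(1 / 2) * (X ω - Y ω) ^ 2) ∂μ)
      + k * ∫ ω, (1 - (X ω - Y ω) ^ 2) * Real.exp (-(1 / 2) * (X ω - Y ω) ^ 2) ∂μ
      = (1 + 2 * (1 - k)) ^ (-(1 / 2) : ℝ)
        + k * ((1 + 2 * (1 - k)) ^ (-(1 / 2) : ℝ)) ^ 3 := by
  obtain ⟨hkm, hk1⟩ := hk
  have hmap : Measure.map (fun ω => X ω - Y ω) μ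
      = gaussianReal 0 (Real.toNNReal (2 - 2 * k)) := by
    have h := hgauss 1 (-1)
    have harg : (1:ℝ) ^ 2 + (-1) ^ 2 + 2 * 1 * (-1) * k = 2 - 2 * k := by ring
    rw [harg] at h
    have hfe : (fun ω => X ω - Y ω) = (fun ω => 1 * X ω + (-1) * Y ω) := by
      funext ω; ring
    rw [hfe]; exact h
  have haem : AEMeasurable (fun ω => X ω - Y ω) μ := by
    by_contra hc
    rw [Measure.map_of_not_aemeasurable hc] at hmap
    exact (IsProbabilityMeasure.ne_zero (gaussianReal 0 _)) hmap.symm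
  have hg1 : Continuous fun x : ℝ => Real.exp (-(1/2) * x ^ 2) :=
    (continuous_const.mul (continuous_pow 2)).rexp
  have hg2 : Continuous fun x : ℝ => (1 - x ^ 2) * Real.exp (-(1/2) * x ^ 2) :=
    (continuous_const.sub (continuous_pow 2)).mul hg1
  have e1 : ∫ ω, Real.exp (-(1/2) * (X ω - Y ω) ^ 2) ∂μ
      = ∫ x, Real.exp (-(1/2) * x ^ 2) ∂(gaussianReal 0 (Real.toNNReal (2 - 2 * k))) := by
    rw [← hmap, integral_map haem hg1.aestronglyMeasurable]
  have e2 : ∫ ω, (1 - (X ω - Y ω) ^ 2) * Real.exp (-(1/2) * (X ω - Y ω) ^ 2) ∂μ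
      = ∫ x, (1 - x ^ 2) * Real.exp (-(1/2) * x ^ 2)
          ∂(gaussianReal 0 (Real.toNNReal (2 - 2 * k))) := by
    rw [← hmap, integral_map haem hg2.aestronglyMeasurable]
  rw [e1, e2]
  by_cases hkeq : k = 1
  · subst hkeq
    have h0 : Real.toNNReal (2 - 2 * 1) = 0 := by norm_num
    rw [h0, gaussianReal_zero_var, integral_dirac, integral_dirac]
    norm_num
  · have hklt : k < 1 := lt_of_le_of_ne hk1 hkeq
    have ht : (0:ℝ) < 2 - 2 * k := by linarith
    have hvne : Real.toNNReal (2 - 2 * k) ≠ 0 := by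
      rw [Ne, Real.toNNReal_eq_zero]
      push_neg
      exact ht
    have hVc : ((Real.toNNReal (2 - 2 * k) : NNReal) : ℝ) = 2 - 2 * k :=
      Real.coe_toNNReal _ ht.le
    have hi1 : Integrable (fun x : ℝ => Real.exp (-(1/2) * x ^ 2))
        (gaussianReal 0 (Real.toNNReal (2 - 2 * k))) := by
      refine Integrable.mono' (integrable_const (1:ℝ)) hg1.aestronglyMeasurable ?_
      filter_upwards with x
      rw [Real.norm_of_nonneg (Real.exp_pos _).le]
      exact Real.exp_le_one_iff.mpr (by nlinarith [sq_nonneg x])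
    have hi2 : Integrable (fun x : ℝ => x ^ 2 * Real.exp (-(1/2) * x ^ 2))
        (gaussianReal 0 (Real.toNNReal (2 - 2 * k))) := by
      refine Integrable.mono' (integrable_const (2:ℝ))
        ((continuous_pow 2).mul hg1).aestronglyMeasurable ?_
      filter_upwards with x
      rw [Real.norm_of_nonneg (by positivity)]
      have h1 := Real.add_one_le_exp (x ^ 2 / 2)
      have h2 : Real.exp (-(1/2) * x ^ 2) = (Real.exp (x ^ 2 / 2))⁻¹ := by
        rw [← Real.exp_neg]; ring_nf
      have h3 := Real.exp_pos (x ^ 2 / 2)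
      rw [h2]
      rw [mul_inv_le_iff₀ h3]
      nlinarith
    have hsplit : ∫ x, (1 - x ^ 2) * Real.exp (-(1/2) * x ^ 2)
          ∂(gaussianReal 0 (Real.toNNReal (2 - 2 * k)))
        = (∫ x, Real.exp (-(1/2) * x ^ 2) ∂(gaussianReal 0 (Real.toNNReal (2 - 2 * k))))
          - ∫ x, x ^ 2 * Real.exp (-(1/2) * x ^ 2)
              ∂(gaussianReal 0 (Real.toNNReal (2 - 2 * k))) := by
      rw [← integral_sub hi1 hi2]
      congr 1
      funext x
      ring
    rw [hsplit, L1 hvne, L2 hvne, hVc]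
    have hBB : (1:ℝ) + (2 - 2 * k) = 1 + 2 * (1 - k) := by ring
    rw [hBB]
    have hBpos : (0:ℝ) < 1 + 2 * (1 - k) := by linarith
    have hrs : Real.sqrt ((1 + 2 * (1 - k))⁻¹) = (1 + 2 * (1 - k)) ^ (-(1/2) : ℝ) := by
      rw [Real.sqrt_eq_rpow, ← Real.rpow_neg_one (1 + 2 * (1 - k)),
        ← Real.rpow_mul hBpos.le]
      norm_num
    rw [hrs]
    set r := (1 + 2 * (1 - k)) ^ (-(1/2) : ℝ) with hrdef
    have hBr : (1 + 2 * (1 - k)) * r ^ 2 = 1 := by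
      rw [hrdef, ← Real.rpow_natCast ((1 + 2 * (1 - k)) ^ (-(1/2) : ℝ)) 2,
        ← Real.rpow_mul hBpos.le]
      norm_num [Real.rpow_neg_one]
      field_simp
    have hinv : (1 + 2 * (1 - k))⁻¹ = r ^ 2 := inv_eq_of_mul_eq_one_right hBr
    rw [hinv]
    linear_combination (-(k * r)) * hBr
end
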